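/- arXiv:2204.08045 — 6 statements merged into one kernel-verified Lean document; each statement's English description precedes it below -/
import Mathlib

section
/- Let f ∈ ℂ[[x,y,z,t]] be such that, with respect to the weights (4,3,2,1) for (x,y,z,t), one has wt f = 6, and such that f is contact equivalent to x³ + y⁴ + z² + t² (i.e. f defines an E₆-singularity). Then the coefficient of the monomial xz in f is zero. -/
noncomputable section

open MvPowerSeries

/-- `f` and `g` are contact equivalent if `g = u·Φ(f)` for some ℂ-algebra automorphism `Φ`
of `ℂ[[x,y,z,t]]` and some unit `u`. -/
def ContactEquiv (f g : MvPowerSeries (Fin 4) ℂ) : Prop :=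
  ∃ (Φ : MvPowerSeries (Fin 4) ℂ ≃ₐ[ℂ] MvPowerSeries (Fin 4) ℂ)
    (u : (MvPowerSeries (Fin 4) ℂ)ˣ), g = (u : MvPowerSeries (Fin 4) ℂ) * Φ f

namespace Stmt7Aux

abbrev R4 : Type := MvPowerSeries (Fin 4) ℂ

lemma two_var_repr {i j : Fin 4} (hij : i ≠ j) (u : Fin 4 →₀ ℕ)
    (h : ∀ m, m ≠ i → m ≠ j → u m = 0) :
    u = Finsupp.single i (u i) + Finsupp.single j (u j) := by
  ext m
  rw [Finsupp.add_apply, Finsupp.single_apply, Finsupp.single_apply]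
  by_cases hmi : m = i
  · subst hmi
    rw [if_pos rfl, if_neg (fun h' => hij h'.symm), add_zero]
  · by_cases hmj : m = j
    · subst hmj
      rw [if_pos rfl, if_neg (fun h' => hij h'), zero_add]
    · rw [if_neg (fun h' => hmi h'.symm), if_neg (fun h' => hmj h'.symm), add_zero,
        h m hmi hmj]

theorem coeff_mul_two_var (i j : Fin 4) (hij : i ≠ j) (a b : ℕ) (p q : R4) :
    (coeff (Finsupp.single i a + Finsupp.single j b)) (p * q) =
      ∑ k ∈ Finset.range (a+1), ∑ l ∈ Finset.range (b+1),
        (coeff (Finsupp.single i k + Finsupp.single j l)) p *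
        (coeff (Finsupp.single i (a-k) + Finsupp.single j (b-l))) q := by
  classical
  rw [coeff_mul, ← Finset.sum_product']
  have key : ∀ x ∈ Finset.HasAntidiagonal.antidiagonal (Finsupp.single i a + Finsupp.single j b),
      (x.1 = Finsupp.single i (x.1 i) + Finsupp.single j (x.1 j)) ∧
      (x.2 = Finsupp.single i (a - x.1 i) + Finsupp.single j (b - x.1 j)) ∧
      x.1 i ≤ a ∧ x.1 j ≤ b := by
    intro x hx
    rw [Finset.HasAntidiagonal.mem_antidiagonal] at hx
    have happ : ∀ m : Fin 4, x.1 m + x.2 m = (Finsupp.single i a + Finsupp.single j b) m :=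
      fun m => by rw [← Finsupp.add_apply, hx]
    have hi := happ i
    have hj := happ j
    rw [Finsupp.add_apply, Finsupp.single_apply, Finsupp.single_apply,
      if_pos rfl, if_neg (fun h' => hij h'.symm), add_zero] at hi
    rw [Finsupp.add_apply, Finsupp.single_apply, Finsupp.single_apply,
      if_pos rfl, if_neg (fun h' => hij h'), zero_add] at hj
    have hzero : ∀ m, m ≠ i → m ≠ j → x.1 m = 0 ∧ x.2 m = 0 := by
      intro m hmi hmj
      have := happ m
      rw [Finsupp.add_apply, Finsupp.single_apply, Finsupp.single_apply,
        if_neg (fun h' => hmi h'.symm), if_neg (fun h' => hmj h'.symm)] at this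
      omega
    refine ⟨two_var_repr hij x.1 (fun m h1 h2 => (hzero m h1 h2).1), ?_, by omega, by omega⟩
    have h2 := two_var_repr hij x.2 (fun m h1 h2 => (hzero m h1 h2).2)
    rw [h2]
    congr 1 <;> congr 1 <;> omega
  refine Finset.sum_nbij' (i := fun x => (x.1 i, x.1 j))
    (j := fun kl => (Finsupp.single i kl.1 + Finsupp.single j kl.2,
      Finsupp.single i (a - kl.1) + Finsupp.single j (b - kl.2))) ?_ ?_ ?_ ?_ ?_
  · intro x hx
    obtain ⟨_, _, h3, h4⟩ := key x hx
    simp [Finset.mem_product, Finset.mem_range]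
    omega
  · intro kl hkl
    simp only [Finset.mem_product, Finset.mem_range] at hkl
    rw [Finset.HasAntidiagonal.mem_antidiagonal]
    have h1 : kl.1 + (a - kl.1) = a := by omega
    have h2 : kl.2 + (b - kl.2) = b := by omega
    rw [add_add_add_comm, ← Finsupp.single_add, ← Finsupp.single_add, h1, h2]
  · intro x hx
    obtain ⟨h1, h2, _, _⟩ := key x hx
    ext : 1
    · exact h1.symm
    · exact h2.symm
  · intro kl hkl
    simp [Finsupp.single_apply, hij, hij.symm]
  · intro x hx
    obtain ⟨h1, h2, _, _⟩ := key x hx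
    rw [← h1, ← h2]

end Stmt7Aux

namespace Stmt7Aux
open Finsupp

lemma const_zero_of (Ψ : R4 ≃ₐ[ℂ] R4) (g : R4) (hg : constantCoeff g = 0) :
    constantCoeff (Ψ g) = 0 := by
  by_contra hne
  have hunit : IsUnit (Ψ g) := isUnit_iff_constantCoeff.mpr (isUnit_iff_ne_zero.mpr hne)
  have : IsUnit g := by
    have := hunit.map Ψ.symm
    rwa [AlgEquiv.symm_apply_apply] at this
  have := isUnit_iff_constantCoeff.mp this
  rw [hg] at this
  exact (isUnit_iff_ne_zero.mp this) rfl

lemma decomp (h : R4) (h0 : (constantCoeff) h = 0)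
    (h1 : ∀ i, (coeff (Finsupp.single i 1)) h = 0) :
    ∃ g : Fin 4 → R4, (∀ i, (constantCoeff) (g i) = 0) ∧ h = ∑ i, X i * g i := by
  classical
  have hsub : ∀ (d : Fin 4 →₀ ℕ) (i : Fin 4), (1:ℕ) ≤ d i →
      d - Finsupp.single i 1 + Finsupp.single i 1 = d := by
    intro d i hi
    ext m
    rw [Finsupp.add_apply, Finsupp.tsub_apply, Finsupp.single_apply]
    by_cases hmi : i = m
    · subst hmi; rw [if_pos rfl]; omega
    · simp [hmi]
  have happ : ∀ (d : Fin 4 →₀ ℕ) (i j : Fin 4), i ≠ j →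
      ((d - Finsupp.single i 1 : Fin 4 →₀ ℕ)) j = d j := by
    intro d i j hij
    rw [Finsupp.tsub_apply, Finsupp.single_apply, if_neg hij]
    omega
  set g0 : R4 := fun d => (coeff (d + Finsupp.single 0 1)) h with hg0
  set g1 : R4 := fun d => if d 0 = 0 then (coeff (d + Finsupp.single 1 1)) h else 0 with hg1
  set g2 : R4 := fun d => if d 0 = 0 ∧ d 1 = 0 then (coeff (d + Finsupp.single 2 1)) h else 0
    with hg2
  set g3 : R4 := fun d => if d 0 = 0 ∧ d 1 = 0 ∧ d 2 = 0 then
      (coeff (d + Finsupp.single 3 1)) h else 0 with hg3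
  have key : ∀ (i : Fin 4) (q : R4) (d : Fin 4 →₀ ℕ), (coeff d) (X i * q) =
      if (1:ℕ) ≤ d i then (coeff (d - Finsupp.single i 1)) q else 0 := by
    intro i q d
    rw [X_def, coeff_monomial_mul]
    simp [Finsupp.single_le_iff]
  have s0 : ∀ d : Fin 4 →₀ ℕ, (coeff d) (X 0 * g0) =
      if (1:ℕ) ≤ d 0 then (coeff d) h else 0 := by
    intro d
    rw [key]
    by_cases hd : (1:ℕ) ≤ d 0
    · rw [if_pos hd, if_pos hd, hg0, coeff_apply]
      show (coeff (d - Finsupp.single 0 1 + Finsupp.single 0 1)) h = _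
      rw [hsub d 0 hd, coeff_apply]
    · rw [if_neg hd, if_neg hd]
  have s1 : ∀ d : Fin 4 →₀ ℕ, (coeff d) (X 1 * g1) =
      if (1:ℕ) ≤ d 1 ∧ d 0 = 0 then (coeff d) h else 0 := by
    intro d
    rw [key]
    by_cases hd : (1:ℕ) ≤ d 1
    · rw [if_pos hd, hg1, coeff_apply]
      show (if ((d - Finsupp.single 1 1 : Fin 4 →₀ ℕ)) 0 = 0 then
          (coeff ((d - Finsupp.single 1 1) + Finsupp.single 1 1)) h else 0) = _
      rw [hsub d 1 hd, happ d 1 0 (by decide)]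
      by_cases hz : d 0 = 0
      · rw [if_pos hz, if_pos ⟨hd, hz⟩, coeff_apply]
      · rw [if_neg hz, if_neg (fun hc => hz hc.2)]
    · rw [if_neg hd, if_neg (fun hc => hd hc.1)]
  have s2 : ∀ d : Fin 4 →₀ ℕ, (coeff d) (X 2 * g2) =
      if (1:ℕ) ≤ d 2 ∧ d 0 = 0 ∧ d 1 = 0 then (coeff d) h else 0 := by
    intro d
    rw [key]
    by_cases hd : (1:ℕ) ≤ d 2
    · rw [if_pos hd, hg2, coeff_apply]
      show (if ((d - Finsupp.single 2 1 : Fin 4 →₀ ℕ)) 0 = 0 ∧ ((d - Finsupp.single 2 1 : Fin 4 →₀ ℕ)) 1 = 0 then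
          (coeff ((d - Finsupp.single 2 1) + Finsupp.single 2 1)) h else 0) = _
      rw [hsub d 2 hd, happ d 2 0 (by decide), happ d 2 1 (by decide)]
      by_cases hz : d 0 = 0 ∧ d 1 = 0
      · rw [if_pos hz, if_pos ⟨hd, hz⟩, coeff_apply]
      · rw [if_neg hz, if_neg (fun hc => hz hc.2)]
    · rw [if_neg hd, if_neg (fun hc => hd hc.1)]
  have s3 : ∀ d : Fin 4 →₀ ℕ, (coeff d) (X 3 * g3) =
      if (1:ℕ) ≤ d 3 ∧ d 0 = 0 ∧ d 1 = 0 ∧ d 2 = 0 then (coeff d) h else 0 := by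
    intro d
    rw [key]
    by_cases hd : (1:ℕ) ≤ d 3
    · rw [if_pos hd, hg3, coeff_apply]
      show (if ((d - Finsupp.single 3 1 : Fin 4 →₀ ℕ)) 0 = 0 ∧ ((d - Finsupp.single 3 1 : Fin 4 →₀ ℕ)) 1 = 0 ∧
          ((d - Finsupp.single 3 1 : Fin 4 →₀ ℕ)) 2 = 0 then
          (coeff ((d - Finsupp.single 3 1) + Finsupp.single 3 1)) h else 0) = _
      rw [hsub d 3 hd, happ d 3 0 (by decide), happ d 3 1 (by decide), happ d 3 2 (by decide)]
      by_cases hz : d 0 = 0 ∧ d 1 = 0 ∧ d 2 = 0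
      · rw [if_pos hz, if_pos ⟨hd, hz⟩, coeff_apply]
      · rw [if_neg hz, if_neg (fun hc => hz hc.2)]
    · rw [if_neg hd, if_neg (fun hc => hd hc.1)]
  refine ⟨![g0, g1, g2, g3], ?_, ?_⟩
  · intro i
    have c0 : (constantCoeff) g0 = 0 := by
      rw [← coeff_zero_eq_constantCoeff_apply, coeff_apply, hg0]
      show (coeff ((0 : Fin 4 →₀ ℕ) + Finsupp.single 0 1)) h = 0
      rw [zero_add]; exact h1 0
    have c1 : (constantCoeff) g1 = 0 := by
      rw [← coeff_zero_eq_constantCoeff_apply, coeff_apply, hg1]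
      show (if ((0:Fin 4 →₀ ℕ)) 0 = 0 then
          (coeff ((0 : Fin 4 →₀ ℕ) + Finsupp.single 1 1)) h else 0) = 0
      rw [if_pos (by simp), zero_add]; exact h1 1
    have c2 : (constantCoeff) g2 = 0 := by
      rw [← coeff_zero_eq_constantCoeff_apply, coeff_apply, hg2]
      show (if ((0:Fin 4 →₀ ℕ)) 0 = 0 ∧ ((0:Fin 4 →₀ ℕ)) 1 = 0 then
          (coeff ((0 : Fin 4 →₀ ℕ) + Finsupp.single 2 1)) h else 0) = 0
      rw [if_pos (by simp), zero_add]; exact h1 2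
    have c3 : (constantCoeff) g3 = 0 := by
      rw [← coeff_zero_eq_constantCoeff_apply, coeff_apply, hg3]
      show (if ((0:Fin 4 →₀ ℕ)) 0 = 0 ∧ ((0:Fin 4 →₀ ℕ)) 1 = 0 ∧ ((0:Fin 4 →₀ ℕ)) 2 = 0 then
          (coeff ((0 : Fin 4 →₀ ℕ) + Finsupp.single 3 1)) h else 0) = 0
      rw [if_pos (by simp), zero_add]; exact h1 3
    fin_cases i <;> simpa using (by assumption : _)
  · ext d
    rw [map_sum, Fin.sum_univ_four]
    simp only [Matrix.cons_val_zero, Matrix.cons_val_one, Matrix.head_cons,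
      Matrix.cons_val_two, Matrix.tail_cons, Matrix.cons_val_three]
    rw [s0, s1, s2, s3]
    by_cases hd : d = 0
    · subst hd
      rw [coeff_zero_eq_constantCoeff_apply, h0]
      norm_num
    · have h4 : ¬(d 0 = 0 ∧ d 1 = 0 ∧ d 2 = 0 ∧ d 3 = 0) := by
        rintro ⟨ha, hb, hc, he⟩
        refine hd (Finsupp.ext fun m => ?_)
        fin_cases m <;> assumption
      split_ifs <;> first | omega | simp

end Stmt7Aux

namespace Stmt7Aux

lemma coeff_single_mul_zero (k : Fin 4) (p q : R4)
    (hp : constantCoeff p = 0) (hq : constantCoeff q = 0) :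
    (coeff (Finsupp.single k 1)) (p * q) = 0 := by
  obtain ⟨j, hj⟩ := exists_ne k
  have hrepr : (Finsupp.single k 1 : Fin 4 →₀ ℕ) =
      Finsupp.single k 1 + Finsupp.single j 0 := by simp
  rw [hrepr, coeff_mul_two_var k j (Ne.symm hj) 1 0]
  simp only [Finset.sum_range_succ, Finset.sum_range_zero]
  norm_num
  rw [hp, hq]
  ring

lemma coeff_single_equiv (Ψ : R4 ≃ₐ[ℂ] R4) (h : R4)
    (h0 : constantCoeff h = 0) (k : Fin 4) :
    (coeff (Finsupp.single k 1)) (Ψ h) =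
      ∑ i, (coeff (Finsupp.single i 1)) h * (coeff (Finsupp.single k 1)) (Ψ (X i)) := by
  classical
  set h' := h - ∑ i, (coeff (Finsupp.single i 1)) h • (X i : R4) with hh'
  have hXlin : ∀ (m i : Fin 4),
      (coeff (Finsupp.single m 1)) (X i : R4) = if i = m then 1 else 0 := by
    intro m i
    rw [X_def, coeff_monomial]
    by_cases him : i = m
    · subst him; rw [if_pos rfl, if_pos rfl]
    · rw [if_neg him, if_neg (fun hc : Finsupp.single m 1 = Finsupp.single i 1 => him (by
        have := Finsupp.single_left_injective (α := Fin 4) ((one_ne_zero : (1:ℕ) ≠ 0)) hc.symm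
        exact this))]
  have h'0 : constantCoeff h' = 0 := by
    rw [hh', map_sub, map_sum, h0]
    have hX0 : ∀ i : Fin 4, (constantCoeff) ((coeff (Finsupp.single i 1)) h • (X i : R4)) = 0 := by
      intro i
      rw [← coeff_zero_eq_constantCoeff_apply, coeff_smul,
        coeff_zero_eq_constantCoeff_apply, constantCoeff_X, mul_zero]
    rw [Finset.sum_congr rfl (fun i _ => hX0 i)]
    simp
  have h'lin : ∀ m, (coeff (Finsupp.single m 1)) h' = 0 := by
    intro m
    rw [hh', map_sub, map_sum]
    rw [Finset.sum_congr rfl (fun i _ => by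
      rw [coeff_smul, hXlin m i, mul_ite, mul_one, mul_zero])]
    rw [Finset.sum_ite_eq' Finset.univ m (fun i => (coeff (Finsupp.single i 1)) h)]
    simp
  obtain ⟨g, hg0, hgd⟩ := decomp h' h'0 h'lin
  have hsplit : Ψ h = Ψ h' + ∑ i, (coeff (Finsupp.single i 1)) h • Ψ (X i) := by
    rw [hh']
    rw [map_sub, map_sum]
    simp only [map_smul]
    ring
  rw [hsplit, map_add, map_sum]
  have hz : (coeff (Finsupp.single k 1)) (Ψ h') = 0 := by
    rw [hgd, map_sum, map_sum]
    refine Finset.sum_eq_zero fun i _ => ?_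
    rw [map_mul]
    exact coeff_single_mul_zero k _ _ (const_zero_of Ψ _ (constantCoeff_X i))
      (const_zero_of Ψ _ (hg0 i))
  rw [hz, zero_add]
  exact Finset.sum_congr rfl fun i _ => by rw [coeff_smul]

end Stmt7Aux

namespace Stmt7Aux

lemma mul23_0_0 (p q : R4) :
    (coeff (Finsupp.single (2:Fin 4) 0 + Finsupp.single 3 0)) (p * q) =
      ∑ k ∈ Finset.range (0+1), ∑ l ∈ Finset.range (0+1),
        (coeff (Finsupp.single (2:Fin 4) k + Finsupp.single 3 l)) p *
        (coeff (Finsupp.single (2:Fin 4) (0-k) + Finsupp.single 3 (0-l))) q :=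
  coeff_mul_two_var 2 3 (by decide) 0 0 p q

lemma mul23_0_1 (p q : R4) :
    (coeff (Finsupp.single (2:Fin 4) 0 + Finsupp.single 3 1)) (p * q) =
      ∑ k ∈ Finset.range (0+1), ∑ l ∈ Finset.range (1+1),
        (coeff (Finsupp.single (2:Fin 4) k + Finsupp.single 3 l)) p *
        (coeff (Finsupp.single (2:Fin 4) (0-k) + Finsupp.single 3 (1-l))) q :=
  coeff_mul_two_var 2 3 (by decide) 0 1 p q

lemma mul23_0_2 (p q : R4) :
    (coeff (Finsupp.single (2:Fin 4) 0 + Finsupp.single 3 2)) (p * q) =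
      ∑ k ∈ Finset.range (0+1), ∑ l ∈ Finset.range (2+1),
        (coeff (Finsupp.single (2:Fin 4) k + Finsupp.single 3 l)) p *
        (coeff (Finsupp.single (2:Fin 4) (0-k) + Finsupp.single 3 (2-l))) q :=
  coeff_mul_two_var 2 3 (by decide) 0 2 p q

lemma mul23_0_3 (p q : R4) :
    (coeff (Finsupp.single (2:Fin 4) 0 + Finsupp.single 3 3)) (p * q) =
      ∑ k ∈ Finset.range (0+1), ∑ l ∈ Finset.range (3+1),
        (coeff (Finsupp.single (2:Fin 4) k + Finsupp.single 3 l)) p *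
        (coeff (Finsupp.single (2:Fin 4) (0-k) + Finsupp.single 3 (3-l))) q :=
  coeff_mul_two_var 2 3 (by decide) 0 3 p q

lemma mul23_0_4 (p q : R4) :
    (coeff (Finsupp.single (2:Fin 4) 0 + Finsupp.single 3 4)) (p * q) =
      ∑ k ∈ Finset.range (0+1), ∑ l ∈ Finset.range (4+1),
        (coeff (Finsupp.single (2:Fin 4) k + Finsupp.single 3 l)) p *
        (coeff (Finsupp.single (2:Fin 4) (0-k) + Finsupp.single 3 (4-l))) q :=
  coeff_mul_two_var 2 3 (by decide) 0 4 p q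

lemma mul23_1_0 (p q : R4) :
    (coeff (Finsupp.single (2:Fin 4) 1 + Finsupp.single 3 0)) (p * q) =
      ∑ k ∈ Finset.range (1+1), ∑ l ∈ Finset.range (0+1),
        (coeff (Finsupp.single (2:Fin 4) k + Finsupp.single 3 l)) p *
        (coeff (Finsupp.single (2:Fin 4) (1-k) + Finsupp.single 3 (0-l))) q :=
  coeff_mul_two_var 2 3 (by decide) 1 0 p q

lemma mul23_1_1 (p q : R4) :
    (coeff (Finsupp.single (2:Fin 4) 1 + Finsupp.single 3 1)) (p * q) =
      ∑ k ∈ Finset.range (1+1), ∑ l ∈ Finset.range (1+1),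
        (coeff (Finsupp.single (2:Fin 4) k + Finsupp.single 3 l)) p *
        (coeff (Finsupp.single (2:Fin 4) (1-k) + Finsupp.single 3 (1-l))) q :=
  coeff_mul_two_var 2 3 (by decide) 1 1 p q

lemma mul23_1_2 (p q : R4) :
    (coeff (Finsupp.single (2:Fin 4) 1 + Finsupp.single 3 2)) (p * q) =
      ∑ k ∈ Finset.range (1+1), ∑ l ∈ Finset.range (2+1),
        (coeff (Finsupp.single (2:Fin 4) k + Finsupp.single 3 l)) p *
        (coeff (Finsupp.single (2:Fin 4) (1-k) + Finsupp.single 3 (2-l))) q :=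
  coeff_mul_two_var 2 3 (by decide) 1 2 p q

lemma mul23_1_3 (p q : R4) :
    (coeff (Finsupp.single (2:Fin 4) 1 + Finsupp.single 3 3)) (p * q) =
      ∑ k ∈ Finset.range (1+1), ∑ l ∈ Finset.range (3+1),
        (coeff (Finsupp.single (2:Fin 4) k + Finsupp.single 3 l)) p *
        (coeff (Finsupp.single (2:Fin 4) (1-k) + Finsupp.single 3 (3-l))) q :=
  coeff_mul_two_var 2 3 (by decide) 1 3 p q

lemma mul23_1_4 (p q : R4) :
    (coeff (Finsupp.single (2:Fin 4) 1 + Finsupp.single 3 4)) (p * q) =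
      ∑ k ∈ Finset.range (1+1), ∑ l ∈ Finset.range (4+1),
        (coeff (Finsupp.single (2:Fin 4) k + Finsupp.single 3 l)) p *
        (coeff (Finsupp.single (2:Fin 4) (1-k) + Finsupp.single 3 (4-l))) q :=
  coeff_mul_two_var 2 3 (by decide) 1 4 p q

lemma mul23_2_0 (p q : R4) :
    (coeff (Finsupp.single (2:Fin 4) 2 + Finsupp.single 3 0)) (p * q) =
      ∑ k ∈ Finset.range (2+1), ∑ l ∈ Finset.range (0+1),
        (coeff (Finsupp.single (2:Fin 4) k + Finsupp.single 3 l)) p *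
        (coeff (Finsupp.single (2:Fin 4) (2-k) + Finsupp.single 3 (0-l))) q :=
  coeff_mul_two_var 2 3 (by decide) 2 0 p q

lemma mul23_2_1 (p q : R4) :
    (coeff (Finsupp.single (2:Fin 4) 2 + Finsupp.single 3 1)) (p * q) =
      ∑ k ∈ Finset.range (2+1), ∑ l ∈ Finset.range (1+1),
        (coeff (Finsupp.single (2:Fin 4) k + Finsupp.single 3 l)) p *
        (coeff (Finsupp.single (2:Fin 4) (2-k) + Finsupp.single 3 (1-l))) q :=
  coeff_mul_two_var 2 3 (by decide) 2 1 p q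

lemma mul23_2_2 (p q : R4) :
    (coeff (Finsupp.single (2:Fin 4) 2 + Finsupp.single 3 2)) (p * q) =
      ∑ k ∈ Finset.range (2+1), ∑ l ∈ Finset.range (2+1),
        (coeff (Finsupp.single (2:Fin 4) k + Finsupp.single 3 l)) p *
        (coeff (Finsupp.single (2:Fin 4) (2-k) + Finsupp.single 3 (2-l))) q :=
  coeff_mul_two_var 2 3 (by decide) 2 2 p q

lemma mul23_2_3 (p q : R4) :
    (coeff (Finsupp.single (2:Fin 4) 2 + Finsupp.single 3 3)) (p * q) =
      ∑ k ∈ Finset.range (2+1), ∑ l ∈ Finset.range (3+1),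
        (coeff (Finsupp.single (2:Fin 4) k + Finsupp.single 3 l)) p *
        (coeff (Finsupp.single (2:Fin 4) (2-k) + Finsupp.single 3 (3-l))) q :=
  coeff_mul_two_var 2 3 (by decide) 2 3 p q

lemma mul23_2_4 (p q : R4) :
    (coeff (Finsupp.single (2:Fin 4) 2 + Finsupp.single 3 4)) (p * q) =
      ∑ k ∈ Finset.range (2+1), ∑ l ∈ Finset.range (4+1),
        (coeff (Finsupp.single (2:Fin 4) k + Finsupp.single 3 l)) p *
        (coeff (Finsupp.single (2:Fin 4) (2-k) + Finsupp.single 3 (4-l))) q :=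
  coeff_mul_two_var 2 3 (by decide) 2 4 p q

lemma mul03_0_0 (p q : R4) :
    (coeff (Finsupp.single (0:Fin 4) 0 + Finsupp.single 3 0)) (p * q) =
      ∑ k ∈ Finset.range (0+1), ∑ l ∈ Finset.range (0+1),
        (coeff (Finsupp.single (0:Fin 4) k + Finsupp.single 3 l)) p *
        (coeff (Finsupp.single (0:Fin 4) (0-k) + Finsupp.single 3 (0-l))) q :=
  coeff_mul_two_var 0 3 (by decide) 0 0 p q

lemma mul03_0_1 (p q : R4) :
    (coeff (Finsupp.single (0:Fin 4) 0 + Finsupp.single 3 1)) (p * q) =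
      ∑ k ∈ Finset.range (0+1), ∑ l ∈ Finset.range (1+1),
        (coeff (Finsupp.single (0:Fin 4) k + Finsupp.single 3 l)) p *
        (coeff (Finsupp.single (0:Fin 4) (0-k) + Finsupp.single 3 (1-l))) q :=
  coeff_mul_two_var 0 3 (by decide) 0 1 p q

lemma mul03_1_0 (p q : R4) :
    (coeff (Finsupp.single (0:Fin 4) 1 + Finsupp.single 3 0)) (p * q) =
      ∑ k ∈ Finset.range (1+1), ∑ l ∈ Finset.range (0+1),
        (coeff (Finsupp.single (0:Fin 4) k + Finsupp.single 3 l)) p *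
        (coeff (Finsupp.single (0:Fin 4) (1-k) + Finsupp.single 3 (0-l))) q :=
  coeff_mul_two_var 0 3 (by decide) 1 0 p q

lemma mul03_1_1 (p q : R4) :
    (coeff (Finsupp.single (0:Fin 4) 1 + Finsupp.single 3 1)) (p * q) =
      ∑ k ∈ Finset.range (1+1), ∑ l ∈ Finset.range (1+1),
        (coeff (Finsupp.single (0:Fin 4) k + Finsupp.single 3 l)) p *
        (coeff (Finsupp.single (0:Fin 4) (1-k) + Finsupp.single 3 (1-l))) q :=
  coeff_mul_two_var 0 3 (by decide) 1 1 p q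

lemma mul02_0_0 (p q : R4) :
    (coeff (Finsupp.single (0:Fin 4) 0 + Finsupp.single 2 0)) (p * q) =
      ∑ k ∈ Finset.range (0+1), ∑ l ∈ Finset.range (0+1),
        (coeff (Finsupp.single (0:Fin 4) k + Finsupp.single 2 l)) p *
        (coeff (Finsupp.single (0:Fin 4) (0-k) + Finsupp.single 2 (0-l))) q :=
  coeff_mul_two_var 0 2 (by decide) 0 0 p q

lemma mul02_0_1 (p q : R4) :
    (coeff (Finsupp.single (0:Fin 4) 0 + Finsupp.single 2 1)) (p * q) =
      ∑ k ∈ Finset.range (0+1), ∑ l ∈ Finset.range (1+1),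
        (coeff (Finsupp.single (0:Fin 4) k + Finsupp.single 2 l)) p *
        (coeff (Finsupp.single (0:Fin 4) (0-k) + Finsupp.single 2 (1-l))) q :=
  coeff_mul_two_var 0 2 (by decide) 0 1 p q

lemma mul02_1_0 (p q : R4) :
    (coeff (Finsupp.single (0:Fin 4) 1 + Finsupp.single 2 0)) (p * q) =
      ∑ k ∈ Finset.range (1+1), ∑ l ∈ Finset.range (0+1),
        (coeff (Finsupp.single (0:Fin 4) k + Finsupp.single 2 l)) p *
        (coeff (Finsupp.single (0:Fin 4) (1-k) + Finsupp.single 2 (0-l))) q :=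
  coeff_mul_two_var 0 2 (by decide) 1 0 p q

lemma mul02_1_1 (p q : R4) :
    (coeff (Finsupp.single (0:Fin 4) 1 + Finsupp.single 2 1)) (p * q) =
      ∑ k ∈ Finset.range (1+1), ∑ l ∈ Finset.range (1+1),
        (coeff (Finsupp.single (0:Fin 4) k + Finsupp.single 2 l)) p *
        (coeff (Finsupp.single (0:Fin 4) (1-k) + Finsupp.single 2 (1-l))) q :=
  coeff_mul_two_var 0 2 (by decide) 1 1 p q


lemma coeff_X_single (m i : Fin 4) :
    (coeff (Finsupp.single m 1)) (X i : R4) = if i = m then 1 else 0 := by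
  rw [X_def, coeff_monomial]
  by_cases him : i = m
  · subst him; rw [if_pos rfl, if_pos rfl]
  · rw [if_neg him, if_neg (fun hc : Finsupp.single m 1 = Finsupp.single i 1 => him
      (Finsupp.single_left_injective (one_ne_zero : (1:ℕ) ≠ 0) hc.symm))]

lemma wsingle (w : Fin 4 → ℕ) (i : Fin 4) (a : ℕ) :
    Finsupp.weight w (Finsupp.single i a) = a * w i := by
  rw [Finsupp.weight_apply, Finsupp.sum_single_index]
  · rw [smul_eq_mul]
  · rw [zero_smul]

end Stmt7Aux

set_option maxHeartbeats 4000000 in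
open Stmt7Aux Finsupp in
/-- if `wt f = 6` w.r.t. the weights `(4,3,2,1)` for `(x,y,z,t)` and `f` defines
an `E₆`-singularity (is contact equivalent to `x³ + y⁴ + z² + t²`), then the coefficient of
the monomial `xz` in `f` is zero. -/
theorem stmt7 (f : MvPowerSeries (Fin 4) ℂ)
    (hwt : f.weightedOrder ![4, 3, 2, 1] = (6 : ℕ∞))
    (hE6 : ContactEquiv f
      ((X 0 : MvPowerSeries (Fin 4) ℂ) ^ 3 + X 1 ^ 4 + X 2 ^ 2 + X 3 ^ 2)) :
    MvPowerSeries.coeff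
      (Finsupp.single (0 : Fin 4) 1 + Finsupp.single (2 : Fin 4) 1) f = 0 := by
  classical
  obtain ⟨Φ, u, hu⟩ := hE6
  have h1 : (↑u⁻¹ : R4) * ((X 0 : R4) ^ 3 + X 1 ^ 4 + X 2 ^ 2 + X 3 ^ 2) = Φ f := by
    rw [hu, ← mul_assoc, Units.inv_mul, one_mul]
  have hfe : f = Φ.symm (↑u⁻¹ : R4) *
      (Φ.symm (X 0) * (Φ.symm (X 0) * Φ.symm (X 0)) +
       Φ.symm (X 1) * (Φ.symm (X 1) * (Φ.symm (X 1) * Φ.symm (X 1))) +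
       Φ.symm (X 2) * Φ.symm (X 2) + Φ.symm (X 3) * Φ.symm (X 3)) := by
    have hfe0 : f = Φ.symm ((↑u⁻¹ : R4) * ((X 0 : R4) ^ 3 + X 1 ^ 4 + X 2 ^ 2 + X 3 ^ 2)) := by
      rw [h1, AlgEquiv.symm_apply_apply]
    rw [hfe0, map_mul, map_add, map_add, map_add, map_pow, map_pow, map_pow, map_pow]
    ring
  set U : R4 := Φ.symm (↑u⁻¹ : R4) with hUdef
  set A : R4 := Φ.symm (X 0) with hAdef
  set B : R4 := Φ.symm (X 1) with hBdef
  set C : R4 := Φ.symm (X 2) with hCdef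
  set D : R4 := Φ.symm (X 3) with hDdef
  have hU0 : (constantCoeff) U ≠ 0 := by
    have hunit : IsUnit U := by
      rw [hUdef]
      exact (Units.isUnit u⁻¹).map Φ.symm
    intro hc
    have := isUnit_iff_constantCoeff.mp hunit
    rw [hc] at this
    exact (isUnit_iff_ne_zero.mp this) rfl
  have hA0 : (constantCoeff) A = 0 := hAdef ▸ const_zero_of Φ.symm _ (constantCoeff_X 0)
  have hB0 : (constantCoeff) B = 0 := hBdef ▸ const_zero_of Φ.symm _ (constantCoeff_X 1)
  have hC0 : (constantCoeff) C = 0 := hCdef ▸ const_zero_of Φ.symm _ (constantCoeff_X 2)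
  have hD0 : (constantCoeff) D = 0 := hDdef ▸ const_zero_of Φ.symm _ (constantCoeff_X 3)
  have hvan : ∀ (i j : Fin 4) (a b : ℕ), a * ![4,3,2,1] i + b * ![4,3,2,1] j < 6 →
      (coeff (Finsupp.single i a + Finsupp.single j b)) f = 0 := by
    intro i j a b hw
    apply coeff_eq_zero_of_lt_weightedOrder
    rw [hwt]
    have hcalc : Finsupp.weight ![4,3,2,1] (Finsupp.single i a + Finsupp.single j b) =
        a * ![4,3,2,1] i + b * ![4,3,2,1] j := by
      rw [map_add, wsingle, wsingle]
    rw [hcalc]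
    exact_mod_cast hw
  have e0 : (coeff (Finsupp.single (2:Fin 4) 0 + Finsupp.single 3 2)) f = 0 :=
    hvan _ _ 0 2 (by decide)
  rw [hfe] at e0
  simp only [mul23_0_0, mul23_0_1, mul23_0_2, mul23_0_3, mul23_0_4, mul23_1_0, mul23_1_1, mul23_1_2, mul23_1_3, mul23_1_4, mul23_2_0, mul23_2_1, mul23_2_2, mul23_2_3, mul23_2_4, map_add, Finset.sum_range_succ, Finset.sum_range_zero,
    Nat.reduceSub, Nat.reduceAdd] at e0
  simp only [Finsupp.single_zero, add_zero, zero_add, coeff_zero_eq_constantCoeff_apply,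
    hA0, hB0, hC0, hD0, mul_zero, zero_mul, mul_one, one_mul] at e0
  have e1 : (coeff (Finsupp.single (2:Fin 4) 1 + Finsupp.single 3 1)) f = 0 :=
    hvan _ _ 1 1 (by decide)
  rw [hfe] at e1
  simp only [mul23_0_0, mul23_0_1, mul23_0_2, mul23_0_3, mul23_0_4, mul23_1_0, mul23_1_1, mul23_1_2, mul23_1_3, mul23_1_4, mul23_2_0, mul23_2_1, mul23_2_2, mul23_2_3, mul23_2_4, map_add, Finset.sum_range_succ, Finset.sum_range_zero,
    Nat.reduceSub, Nat.reduceAdd] at e1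
  simp only [Finsupp.single_zero, add_zero, zero_add, coeff_zero_eq_constantCoeff_apply,
    hA0, hB0, hC0, hD0, mul_zero, zero_mul, mul_one, one_mul] at e1
  have e2 : (coeff (Finsupp.single (2:Fin 4) 2 + Finsupp.single 3 0)) f = 0 :=
    hvan _ _ 2 0 (by decide)
  rw [hfe] at e2
  simp only [mul23_0_0, mul23_0_1, mul23_0_2, mul23_0_3, mul23_0_4, mul23_1_0, mul23_1_1, mul23_1_2, mul23_1_3, mul23_1_4, mul23_2_0, mul23_2_1, mul23_2_2, mul23_2_3, mul23_2_4, map_add, Finset.sum_range_succ, Finset.sum_range_zero,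
    Nat.reduceSub, Nat.reduceAdd] at e2
  simp only [Finsupp.single_zero, add_zero, zero_add, coeff_zero_eq_constantCoeff_apply,
    hA0, hB0, hC0, hD0, mul_zero, zero_mul, mul_one, one_mul] at e2
  have e3 : (coeff (Finsupp.single (0:Fin 4) 1 + Finsupp.single 3 1)) f = 0 :=
    hvan _ _ 1 1 (by decide)
  rw [hfe] at e3
  simp only [mul03_0_0, mul03_0_1, mul03_1_0, mul03_1_1, map_add, Finset.sum_range_succ, Finset.sum_range_zero,
    Nat.reduceSub, Nat.reduceAdd] at e3
  simp only [Finsupp.single_zero, add_zero, zero_add, coeff_zero_eq_constantCoeff_apply,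
    hA0, hB0, hC0, hD0, mul_zero, zero_mul, mul_one, one_mul] at e3
  have e4 : (coeff (Finsupp.single (2:Fin 4) 0 + Finsupp.single 3 3)) f = 0 :=
    hvan _ _ 0 3 (by decide)
  rw [hfe] at e4
  simp only [mul23_0_0, mul23_0_1, mul23_0_2, mul23_0_3, mul23_0_4, mul23_1_0, mul23_1_1, mul23_1_2, mul23_1_3, mul23_1_4, mul23_2_0, mul23_2_1, mul23_2_2, mul23_2_3, mul23_2_4, map_add, Finset.sum_range_succ, Finset.sum_range_zero,
    Nat.reduceSub, Nat.reduceAdd] at e4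
  simp only [Finsupp.single_zero, add_zero, zero_add, coeff_zero_eq_constantCoeff_apply,
    hA0, hB0, hC0, hD0, mul_zero, zero_mul, mul_one, one_mul] at e4
  have e5 : (coeff (Finsupp.single (2:Fin 4) 1 + Finsupp.single 3 2)) f = 0 :=
    hvan _ _ 1 2 (by decide)
  rw [hfe] at e5
  simp only [mul23_0_0, mul23_0_1, mul23_0_2, mul23_0_3, mul23_0_4, mul23_1_0, mul23_1_1, mul23_1_2, mul23_1_3, mul23_1_4, mul23_2_0, mul23_2_1, mul23_2_2, mul23_2_3, mul23_2_4, map_add, Finset.sum_range_succ, Finset.sum_range_zero,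
    Nat.reduceSub, Nat.reduceAdd] at e5
  simp only [Finsupp.single_zero, add_zero, zero_add, coeff_zero_eq_constantCoeff_apply,
    hA0, hB0, hC0, hD0, mul_zero, zero_mul, mul_one, one_mul] at e5
  have e6 : (coeff (Finsupp.single (2:Fin 4) 0 + Finsupp.single 3 4)) f = 0 :=
    hvan _ _ 0 4 (by decide)
  rw [hfe] at e6
  simp only [mul23_0_0, mul23_0_1, mul23_0_2, mul23_0_3, mul23_0_4, mul23_1_0, mul23_1_1, mul23_1_2, mul23_1_3, mul23_1_4, mul23_2_0, mul23_2_1, mul23_2_2, mul23_2_3, mul23_2_4, map_add, Finset.sum_range_succ, Finset.sum_range_zero,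
    Nat.reduceSub, Nat.reduceAdd] at e6
  simp only [Finsupp.single_zero, add_zero, zero_add, coeff_zero_eq_constantCoeff_apply,
    hA0, hB0, hC0, hD0, mul_zero, zero_mul, mul_one, one_mul] at e6
  rw [hfe]
  simp only [mul02_0_0, mul02_0_1, mul02_1_0, mul02_1_1, map_add, Finset.sum_range_succ, Finset.sum_range_zero,
    Nat.reduceSub, Nat.reduceAdd]
  simp only [Finsupp.single_zero, add_zero, zero_add, coeff_zero_eq_constantCoeff_apply,
    hA0, hB0, hC0, hD0, mul_zero, zero_mul, mul_one, one_mul]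
  set u_0 := (constantCoeff) U with hu_0_def
  set u_t := (coeff (Finsupp.single (3:Fin 4) 1)) U with hu_t_def
  set u_t2 := (coeff (Finsupp.single (3:Fin 4) 2)) U with hu_t2_def
  set u_z := (coeff (Finsupp.single (2:Fin 4) 1)) U with hu_z_def
  set a_t := (coeff (Finsupp.single (3:Fin 4) 1)) A with ha_t_def
  set a_t2 := (coeff (Finsupp.single (3:Fin 4) 2)) A with ha_t2_def
  set a_z := (coeff (Finsupp.single (2:Fin 4) 1)) A with ha_z_def
  set b_t := (coeff (Finsupp.single (3:Fin 4) 1)) B with hb_t_def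
  set c_t := (coeff (Finsupp.single (3:Fin 4) 1)) C with hc_t_def
  set c_t2 := (coeff (Finsupp.single (3:Fin 4) 2)) C with hc_t2_def
  set c_t3 := (coeff (Finsupp.single (3:Fin 4) 3)) C with hc_t3_def
  set c_z := (coeff (Finsupp.single (2:Fin 4) 1)) C with hc_z_def
  set c_zt := (coeff (Finsupp.single (2:Fin 4) 1 + Finsupp.single (3:Fin 4) 1)) C with hc_zt_def
  set c_x := (coeff (Finsupp.single (0:Fin 4) 1)) C with hc_x_def
  set d_t := (coeff (Finsupp.single (3:Fin 4) 1)) D with hd_t_def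
  set d_t2 := (coeff (Finsupp.single (3:Fin 4) 2)) D with hd_t2_def
  set d_t3 := (coeff (Finsupp.single (3:Fin 4) 3)) D with hd_t3_def
  set d_z := (coeff (Finsupp.single (2:Fin 4) 1)) D with hd_z_def
  set d_zt := (coeff (Finsupp.single (2:Fin 4) 1 + Finsupp.single (3:Fin 4) 1)) D with hd_zt_def
  set d_x := (coeff (Finsupp.single (0:Fin 4) 1)) D with hd_x_def
  by_cases hv0 : c_z = 0 ∧ d_z = 0
  · rw [hv0.1, hv0.2]
    ring
  · by_cases hw0 : c_t = 0 ∧ d_t = 0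
    · exfalso
      obtain ⟨hct, hdt⟩ := hw0
      replace hv0 := not_and_or.mp hv0
      have hat : a_t = 0 := by
        rw [hct, hdt] at e4
        have h4' : u_0 * a_t ^ 3 = 0 := by linear_combination e4
        have := (mul_eq_zero.mp h4').resolve_left hU0
        exact pow_eq_zero_iff (three_ne_zero) |>.mp this
      have hq : c_z * c_t2 + d_z * d_t2 = 0 := by
        rw [hct, hdt, hat] at e5
        have h5' : u_0 * (2 * (c_z * c_t2 + d_z * d_t2)) = 0 := by linear_combination e5
        have h5'' := (mul_eq_zero.mp h5').resolve_left hU0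
        linear_combination h5'' / 2
      have hbq : b_t ^ 4 + c_t2 ^ 2 + d_t2 ^ 2 = 0 := by
        rw [hct, hdt, hat] at e6
        have h6' : u_0 * (b_t ^ 4 + c_t2 ^ 2 + d_t2 ^ 2) = 0 := by linear_combination e6
        exact (mul_eq_zero.mp h6').resolve_left hU0
      have hvv : c_z ^ 2 + d_z ^ 2 = 0 := by
        have h2' : u_0 * (c_z ^ 2 + d_z ^ 2) = 0 := by linear_combination e2
        exact (mul_eq_zero.mp h2').resolve_left hU0
      have hcr : c_z * d_t2 - d_z * c_t2 = 0 := by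
        have hsq : (c_z * d_t2 - d_z * c_t2) ^ 2 = 0 := by
          linear_combination (c_t2 ^ 2 + d_t2 ^ 2) * hvv - (c_z * c_t2 + d_z * d_t2) * hq
        exact pow_eq_zero_iff two_ne_zero |>.mp hsq
      have hqq : c_t2 ^ 2 + d_t2 ^ 2 = 0 := by
        rcases hv0 with hcz | hdz
        · have h' : (c_t2 ^ 2 + d_t2 ^ 2) * c_z ^ 2 = 0 := by
            linear_combination c_t2 ^ 2 * hvv + (c_z * d_t2 + d_z * c_t2) * hcr
          rcases mul_eq_zero.mp h' with h'' | h''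
          · exact h''
          · exact absurd (pow_eq_zero_iff two_ne_zero |>.mp h'') hcz
        · have h' : (c_t2 ^ 2 + d_t2 ^ 2) * d_z ^ 2 = 0 := by
            linear_combination d_t2 ^ 2 * hvv - (c_z * d_t2 + d_z * c_t2) * hcr
          rcases mul_eq_zero.mp h' with h'' | h''
          · exact h''
          · exact absurd (pow_eq_zero_iff two_ne_zero |>.mp h'') hdz
      have hbt : b_t = 0 := by
        have : b_t ^ 4 = 0 := by linear_combination hbq - hqq
        exact pow_eq_zero_iff four_ne_zero |>.mp this
      have hcontra := coeff_single_equiv Φ.symm (Φ (X 3))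
        (const_zero_of Φ (X 3) (constantCoeff_X 3)) 3
      rw [AlgEquiv.symm_apply_apply, Fin.sum_univ_four] at hcontra
      rw [← hAdef, ← hBdef, ← hCdef, ← hDdef] at hcontra
      rw [← ha_t_def, ← hb_t_def, ← hc_t_def, ← hd_t_def] at hcontra
      rw [hat, hbt, hct, hdt, coeff_X_single] at hcontra
      norm_num at hcontra
    · replace hw0 := not_and_or.mp hw0
      have hww : c_t ^ 2 + d_t ^ 2 = 0 := by
        have h0' : u_0 * (c_t ^ 2 + d_t ^ 2) = 0 := by linear_combination e0
        exact (mul_eq_zero.mp h0').resolve_left hU0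
      have hvv : c_z ^ 2 + d_z ^ 2 = 0 := by
        have h2' : u_0 * (c_z ^ 2 + d_z ^ 2) = 0 := by linear_combination e2
        exact (mul_eq_zero.mp h2').resolve_left hU0
      have hvw : c_z * c_t + d_z * d_t = 0 := by
        have h1' : u_0 * (2 * (c_z * c_t + d_z * d_t)) = 0 := by linear_combination e1
        have h1'' := (mul_eq_zero.mp h1').resolve_left hU0
        linear_combination h1'' / 2
      have hsw : c_x * c_t + d_x * d_t = 0 := by
        have h3' : u_0 * (2 * (c_x * c_t + d_x * d_t)) = 0 := by linear_combination e3
        have h3'' := (mul_eq_zero.mp h3').resolve_left hU0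
        linear_combination h3'' / 2
      have hcr : c_z * d_t - d_z * c_t = 0 := by
        have hsq : (c_z * d_t - d_z * c_t) ^ 2 = 0 := by
          linear_combination (c_t ^ 2 + d_t ^ 2) * hvv - (c_z * c_t + d_z * d_t) * hvw
        exact pow_eq_zero_iff two_ne_zero |>.mp hsq
      have hS : c_x * c_z + d_x * d_z = 0 := by
        rcases hw0 with h | h
        · have hT : (c_x * c_z + d_x * d_z) * c_t = 0 := by
            linear_combination c_z * hsw - d_x * hcr
          rcases mul_eq_zero.mp hT with h' | h'
          · exact h'
          · exact absurd h' h
        · have hT : (c_x * c_z + d_x * d_z) * d_t = 0 := by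
            linear_combination d_z * hsw + c_x * hcr
          rcases mul_eq_zero.mp hT with h' | h'
          · exact h'
          · exact absurd h' h
      linear_combination 2 * u_0 * hS
end
end

section
/- Let f ∈ ℂ[[x,y,z,t]] be such that, with respect to the weights (4,3,2,1) for (x,y,z,t), one has wt f = 6, and such that f is contact equivalent to x³ + y⁴ + z² + t² (i.e. f defines an E₆-singularity). Then the coefficient of the monomial xt² in f is non-zero. -/
noncomputable section

open MvPowerSeries

namespace Stmt9Aux

open Finsupp Finset

abbrev M4 := MvPowerSeries (Fin 4) ℂ






lemma coeff_apply' (f : M4) (d : Fin 4 →₀ ℕ) : coeff d f = f d := rfl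

lemma weight_eval (w : Fin 4 → ℕ) (d : Fin 4 →₀ ℕ) :
    weight w d = d 0 * w 0 + d 1 * w 1 + d 2 * w 2 + d 3 * w 3 := by
  rw [weight_apply, Finsupp.sum_fintype]
  · simp [Fin.sum_univ_four, smul_eq_mul]
  · intro i; simp

lemma wt_single (w : Fin 4 → ℕ) (i : Fin 4) (p : ℕ) :
    weight w (single i p) = p * w i := by
  rw [weight_eval]
  fin_cases i <;> simp [Finsupp.single_apply]

lemma coeff_X_mul' (i : Fin 4) (φ : M4) (d : Fin 4 →₀ ℕ) :
    coeff d ((X i : M4) * φ) =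
      if single i 1 ≤ d then coeff (d - single i 1) φ else 0 := by
  rw [MvPowerSeries.X, coeff_monomial_mul]
  split <;> simp

/-- least index of the support -/
def midx (d : Fin 4 →₀ ℕ) : Fin 4 :=
  if d 0 ≠ 0 then 0 else if d 1 ≠ 0 then 1 else if d 2 ≠ 0 then 2 else 3

lemma midx_single_one (i : Fin 4) : midx (single i 1) = i := by
  fin_cases i <;> simp [midx, Finsupp.single_apply]

lemma midx_pos {d : Fin 4 →₀ ℕ} (hd : d ≠ 0) : d (midx d) ≠ 0 := by
  unfold midx
  split_ifs with h0 h1 h2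
  · exact h0
  · exact h1
  · exact h2
  · intro h3
    apply hd
    ext s
    fin_cases s <;> simp_all

lemma split_lemma (h : M4) (h0 : coeff 0 h = 0) :
    ∃ r : Fin 4 → M4, h = ∑ i, X i * r i ∧
      ∀ i, coeff 0 (r i) = coeff (single i 1) h := by
  refine ⟨fun i => (id (α := M4) fun d => if midx (d + single i 1) = i
      then coeff (d + single i 1) h else 0), ?_, ?_⟩
  · apply MvPowerSeries.ext
    intro d
    rw [map_sum]
    by_cases hd : d = 0
    · subst hd
      rw [h0, Finset.sum_eq_zero]
      intro i _
      rw [coeff_X_mul', if_neg]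
      intro hle
      have := hle i
      simp [Finsupp.single_apply] at this
    · rw [Finset.sum_eq_single (midx d)]
      · have hpos : single (midx d) 1 ≤ d := by
          rw [Finsupp.single_le_iff]
          exact Nat.one_le_iff_ne_zero.mpr (midx_pos hd)
        rw [coeff_X_mul', if_pos hpos]
        have hc : d - single (midx d) 1 + single (midx d) 1 = d :=
          tsub_add_cancel_of_le hpos
        show _ = (if midx (d - single (midx d) 1 + single (midx d) 1) = midx d
          then coeff (d - single (midx d) 1 + single (midx d) 1) h else 0)
        rw [hc, if_pos rfl]
      · intro i _ hne
        rw [coeff_X_mul']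
        split_ifs with hle
        · have hc : d - single i 1 + single i 1 = d := tsub_add_cancel_of_le hle
          show (if midx (d - single i 1 + single i 1) = i
            then coeff (d - single i 1 + single i 1) h else 0) = 0
          rw [hc, if_neg (fun he => hne he.symm)]
        · rfl
      · intro hmem; exact absurd (Finset.mem_univ _) hmem
  · intro i
    show (if midx (0 + single i 1) = i then coeff (0 + single i 1) h else 0) = _
    rw [zero_add, if_pos (midx_single_one i)]



lemma pair_mem {v : Fin 4} (hv : v ≠ 3) {p q : ℕ} {a b : Fin 4 →₀ ℕ}
    (h : a + b = single v p + single 3 q) :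
    a v ≤ p ∧ a 3 ≤ q ∧ a = single v (a v) + single 3 (a 3)
      ∧ b = single v (p - a v) + single 3 (q - a 3) := by
  have key : ∀ s, a s + b s = (single v p) s + (single 3 q) s := fun s => by
    rw [← Finsupp.add_apply, h, Finsupp.add_apply]
  have hv1 : a v + b v = p := by
    have := key v
    rwa [Finsupp.single_eq_same, Finsupp.single_eq_of_ne' (Ne.symm hv), add_zero] at this
  have h31 : a 3 + b 3 = q := by
    have := key 3
    rwa [Finsupp.single_eq_of_ne' hv, Finsupp.single_eq_same, zero_add] at this
  have hoth : ∀ s, s ≠ v → s ≠ 3 → a s = 0 ∧ b s = 0 := by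
    intro s h1 h2
    have := key s
    rw [Finsupp.single_eq_of_ne' (Ne.symm h1), Finsupp.single_eq_of_ne' (Ne.symm h2),
      add_zero] at this
    omega
  refine ⟨by omega, by omega, ?_, ?_⟩
  · ext s
    rw [Finsupp.add_apply]
    rcases eq_or_ne s v with rfl | h1
    · rw [Finsupp.single_eq_same, Finsupp.single_eq_of_ne' (Ne.symm hv), add_zero]
    · rcases eq_or_ne s 3 with rfl | h2
      · rw [Finsupp.single_eq_of_ne' hv, Finsupp.single_eq_same, zero_add]
      · rw [Finsupp.single_eq_of_ne' (Ne.symm h1), Finsupp.single_eq_of_ne' (Ne.symm h2),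
          add_zero]
        exact (hoth s h1 h2).1
  · ext s
    rw [Finsupp.add_apply]
    rcases eq_or_ne s v with rfl | h1
    · rw [Finsupp.single_eq_same, Finsupp.single_eq_of_ne' (Ne.symm hv), add_zero]
      omega
    · rcases eq_or_ne s 3 with rfl | h2
      · rw [Finsupp.single_eq_of_ne' hv, Finsupp.single_eq_same, zero_add]
        omega
      · rw [Finsupp.single_eq_of_ne' (Ne.symm h1), Finsupp.single_eq_of_ne' (Ne.symm h2),
          add_zero]
        exact (hoth s h1 h2).2

lemma coeff_mul_pair {v : Fin 4} (hv : v ≠ 3) (p q : ℕ) (φ ψ : M4) :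
    coeff (single v p + single 3 q) (φ * ψ) =
      ∑ kl ∈ Finset.range (p+1) ×ˢ Finset.range (q+1),
        coeff (single v kl.1 + single 3 kl.2) φ *
        coeff (single v (p - kl.1) + single 3 (q - kl.2)) ψ := by
  rw [coeff_mul]
  apply Finset.sum_nbij'
    (i := fun (a : (Fin 4 →₀ ℕ) × (Fin 4 →₀ ℕ)) => ((a.1 : (Fin 4 →₀ ℕ)) v, (a.1 : (Fin 4 →₀ ℕ)) 3))
    (j := fun (kl : ℕ × ℕ) => ((single v kl.1 + single 3 kl.2 : Fin 4 →₀ ℕ),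
      (single v (p - kl.1) + single 3 (q - kl.2) : Fin 4 →₀ ℕ)))
  · intro a ha
    rw [Finset.HasAntidiagonal.mem_antidiagonal] at ha
    obtain ⟨h1, h2, -, -⟩ := pair_mem hv ha
    simp only [Finset.mem_product, Finset.mem_range, Nat.lt_succ_iff]
    exact ⟨h1, h2⟩
  · intro kl hkl
    simp only [Finset.mem_product, Finset.mem_range, Nat.lt_succ_iff] at hkl
    rw [Finset.HasAntidiagonal.mem_antidiagonal]
    ext s
    rw [Finsupp.add_apply, Finsupp.add_apply, Finsupp.add_apply, Finsupp.add_apply]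
    rcases eq_or_ne s v with rfl | h1
    · rw [Finsupp.single_eq_same, Finsupp.single_eq_same, Finsupp.single_eq_same,
        Finsupp.single_eq_of_ne' (Ne.symm hv), Finsupp.single_eq_of_ne' (Ne.symm hv),
        Finsupp.single_eq_of_ne' (Ne.symm hv)]
      omega
    · rcases eq_or_ne s 3 with rfl | h2
      · rw [Finsupp.single_eq_same, Finsupp.single_eq_same, Finsupp.single_eq_same,
          Finsupp.single_eq_of_ne' hv, Finsupp.single_eq_of_ne' hv, Finsupp.single_eq_of_ne' hv]
        omega
      · rw [Finsupp.single_eq_of_ne' (Ne.symm h1), Finsupp.single_eq_of_ne' (Ne.symm h1),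
          Finsupp.single_eq_of_ne' (Ne.symm h1), Finsupp.single_eq_of_ne' (Ne.symm h2),
          Finsupp.single_eq_of_ne' (Ne.symm h2), Finsupp.single_eq_of_ne' (Ne.symm h2)]
        simp
  · intro a ha
    rw [Finset.HasAntidiagonal.mem_antidiagonal] at ha
    obtain ⟨-, -, h3, h4⟩ := pair_mem hv ha
    exact Prod.ext h3.symm h4.symm
  · intro kl hkl
    simp only [Finset.mem_product, Finset.mem_range, Nat.lt_succ_iff] at hkl
    have e1 : (single v kl.1 + single 3 kl.2 : Fin 4 →₀ ℕ) v = kl.1 := by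
      rw [Finsupp.add_apply, Finsupp.single_eq_same, Finsupp.single_eq_of_ne' (Ne.symm hv),
        add_zero]
    have e2 : (single v kl.1 + single 3 kl.2 : Fin 4 →₀ ℕ) 3 = kl.2 := by
      rw [Finsupp.add_apply, Finsupp.single_eq_of_ne' hv, Finsupp.single_eq_same, zero_add]
    exact Prod.ext e1 e2
  · intro a ha
    rw [Finset.HasAntidiagonal.mem_antidiagonal] at ha
    obtain ⟨-, -, h3, h4⟩ := pair_mem hv ha
    rw [← h3, ← h4]


lemma const0_mul (φ ψ : M4) :
    coeff 0 (φ * ψ) = coeff 0 φ * coeff 0 ψ := by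
  simp [MvPowerSeries.coeff_zero_eq_constantCoeff]

section CF
variable {φ ψ : M4} (hφ : coeff 0 φ = 0) (hψ : coeff 0 ψ = 0)

include hφ hψ in
lemma cf_t2 : coeff (single 3 2) (φ*ψ) =
    coeff (single 3 1) φ * coeff (single 3 1) ψ := by
  have h := coeff_mul_pair (v := 0) (by decide) 0 2 φ ψ
  simp only [Finsupp.single_zero, zero_add, Finset.sum_product, Finset.sum_range_succ,
    Finset.sum_range_zero, Nat.sub_self, Nat.sub_zero, add_zero, zero_mul, mul_zero,
    hφ, hψ] at h
  linear_combination h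

include hφ hψ in
lemma cf_t3 : coeff (single 3 3) (φ*ψ) =
    coeff (single 3 1) φ * coeff (single 3 2) ψ +
    coeff (single 3 2) φ * coeff (single 3 1) ψ := by
  have h := coeff_mul_pair (v := 0) (by decide) 0 3 φ ψ
  simp only [Finsupp.single_zero, zero_add, Finset.sum_product, Finset.sum_range_succ,
    Finset.sum_range_zero, Nat.sub_self, Nat.sub_zero, add_zero, zero_mul, mul_zero,
    hφ, hψ] at h
  norm_num at h
  linear_combination h

include hφ hψ in
lemma cf_t4 : coeff (single 3 4) (φ*ψ) =
    coeff (single 3 1) φ * coeff (single 3 3) ψ +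
    coeff (single 3 2) φ * coeff (single 3 2) ψ +
    coeff (single 3 3) φ * coeff (single 3 1) ψ := by
  have h := coeff_mul_pair (v := 0) (by decide) 0 4 φ ψ
  simp only [Finsupp.single_zero, zero_add, Finset.sum_product, Finset.sum_range_succ,
    Finset.sum_range_zero, Nat.sub_self, Nat.sub_zero, add_zero, zero_mul, mul_zero,
    hφ, hψ] at h
  norm_num at h
  linear_combination h

include hφ hψ in
lemma cf_z2 : coeff (single 2 2) (φ*ψ) =
    coeff (single 2 1) φ * coeff (single 2 1) ψ := by
  have h := coeff_mul_pair (v := 2) (by decide) 2 0 φ ψ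
  simp only [Finsupp.single_zero, zero_add, add_zero, Finset.sum_product, Finset.sum_range_succ,
    Finset.sum_range_zero, Nat.sub_self, Nat.sub_zero, zero_mul, mul_zero,
    hφ, hψ] at h
  norm_num at h
  linear_combination h

include hφ hψ in
lemma cf_kt {v : Fin 4} (hv : v ≠ 3) :
    coeff (single v 1 + single 3 1) (φ*ψ) =
    coeff (single 3 1) φ * coeff (single v 1) ψ +
    coeff (single v 1) φ * coeff (single 3 1) ψ := by
  have h := coeff_mul_pair hv 1 1 φ ψ
  simp only [Finsupp.single_zero, zero_add, add_zero, Finset.sum_product, Finset.sum_range_succ,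
    Finset.sum_range_zero, Nat.sub_self, Nat.sub_zero, zero_mul, mul_zero,
    hφ, hψ] at h
  linear_combination h

include hφ hψ in
lemma cf_kt2 {v : Fin 4} (hv : v ≠ 3) :
    coeff (single v 1 + single 3 2) (φ*ψ) =
    coeff (single 3 1) φ * coeff (single v 1 + single 3 1) ψ +
    coeff (single 3 2) φ * coeff (single v 1) ψ +
    coeff (single v 1) φ * coeff (single 3 2) ψ +
    coeff (single v 1 + single 3 1) φ * coeff (single 3 1) ψ := by
  have h := coeff_mul_pair hv 1 2 φ ψ
  simp only [Finsupp.single_zero, zero_add, add_zero, Finset.sum_product, Finset.sum_range_succ,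
    Finset.sum_range_zero, Nat.sub_self, Nat.sub_zero, zero_mul, mul_zero,
    hφ, hψ] at h
  norm_num at h
  linear_combination h

lemma cf_lin (k : Fin 4) (φ ψ : M4) :
    coeff (single k 1) (φ*ψ) =
    coeff 0 φ * coeff (single k 1) ψ + coeff (single k 1) φ * coeff 0 ψ := by
  by_cases hk : k = 3
  · subst hk
    have h := coeff_mul_pair (v := 0) (by decide) 0 1 φ ψ
    simp only [Finsupp.single_zero, zero_add, add_zero, Finset.sum_product,
      Finset.sum_range_succ, Finset.sum_range_zero, Nat.sub_self, Nat.sub_zero] at h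
    linear_combination h
  · have h := coeff_mul_pair (v := k) hk 1 0 φ ψ
    simp only [Finsupp.single_zero, zero_add, add_zero, Finset.sum_product,
      Finset.sum_range_succ, Finset.sum_range_zero, Nat.sub_self, Nat.sub_zero] at h
    linear_combination h
end CF

lemma coeff_zero_of_order {φ : M4} {w : Fin 4 → ℕ} {n : ℕ}
    (h : (n:ℕ∞) ≤ φ.weightedOrder w) {d : Fin 4 →₀ ℕ} (hd : weight w d < n) :
    coeff d φ = 0 :=
  coeff_eq_zero_of_lt_weightedOrder w (lt_of_lt_of_le (by exact_mod_cast hd) h)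

lemma order_mul_ge {φ ψ : M4} {w : Fin 4 → ℕ} {m n : ℕ}
    (hm : (m:ℕ∞) ≤ φ.weightedOrder w) (hn : (n:ℕ∞) ≤ ψ.weightedOrder w) :
    ((m+n : ℕ):ℕ∞) ≤ (φ*ψ).weightedOrder w := by
  calc ((m+n:ℕ):ℕ∞) = (m:ℕ∞) + (n:ℕ∞) := by push_cast; rfl
  _ ≤ φ.weightedOrder w + ψ.weightedOrder w := add_le_add hm hn
  _ ≤ _ := le_weightedOrder_mul w

lemma order1_ge {φ : M4} (h : coeff 0 φ = 0) :
    ((1:ℕ):ℕ∞) ≤ φ.weightedOrder (fun _ => 1) := by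
  apply nat_le_weightedOrder
  intro d hd
  rw [weight_eval] at hd
  have h0 : d 0 = 0 := by omega
  have h1 : d 1 = 0 := by omega
  have h2 : d 2 = 0 := by omega
  have h3 : d 3 = 0 := by omega
  have : d = 0 := by
    ext s; fin_cases s
    · exact h0
    · exact h1
    · exact h2
    · exact h3
  rwa [this]

lemma order2221_ge {φ : M4} (h0 : coeff 0 φ = 0) (ht : coeff (single 3 1) φ = 0) :
    ((2:ℕ):ℕ∞) ≤ φ.weightedOrder ![2,2,2,1] := by
  apply nat_le_weightedOrder
  intro d hd
  rw [weight_eval] at hd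
  have e0 : (![2,2,2,1] : Fin 4 → ℕ) 0 = 2 := rfl
  have e1 : (![2,2,2,1] : Fin 4 → ℕ) 1 = 2 := rfl
  have e2 : (![2,2,2,1] : Fin 4 → ℕ) 2 = 2 := rfl
  have e3 : (![2,2,2,1] : Fin 4 → ℕ) 3 = 1 := rfl
  rw [e0, e1, e2, e3] at hd
  have h0' : d 0 = 0 := by omega
  have h1' : d 1 = 0 := by omega
  have h2' : d 2 = 0 := by omega
  have h3' : d 3 = 0 ∨ d 3 = 1 := by omega
  rcases h3' with h3' | h3'
  · have : d = 0 := by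
      ext s; fin_cases s
      · exact h0'
      · exact h1'
      · exact h2'
      · exact h3'
    rwa [this]
  · have : d = single 3 1 := by
      ext s; fin_cases s
      · show d 0 = single (3:Fin 4) 1 0
        rw [Finsupp.single_eq_of_ne' (by decide)]; exact h0'
      · show d 1 = single (3:Fin 4) 1 1
        rw [Finsupp.single_eq_of_ne' (by decide)]; exact h1'
      · show d 2 = single (3:Fin 4) 1 2
        rw [Finsupp.single_eq_of_ne' (by decide)]; exact h2'
      · show d 3 = single (3:Fin 4) 1 3
        rw [Finsupp.single_eq_same]; exact h3'
    rwa [this]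

lemma cube_low {φ : M4} (h : coeff 0 φ = 0) {d : Fin 4 →₀ ℕ}
    (hd : d 0 + d 1 + d 2 + d 3 < 3) : coeff d (φ*φ*φ) = 0 := by
  have h1 := order1_ge h
  have h3 := order_mul_ge (order_mul_ge h1 h1) h1
  norm_num at h3
  apply coeff_zero_of_order (n := 3) h3
  rw [weight_eval]; simpa using hd

lemma quart_low {φ : M4} (h : coeff 0 φ = 0) {d : Fin 4 →₀ ℕ}
    (hd : d 0 + d 1 + d 2 + d 3 < 4) : coeff d (φ*φ*(φ*φ)) = 0 := by
  have h1 := order1_ge h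
  have h4 := order_mul_ge (order_mul_ge h1 h1) (order_mul_ge h1 h1)
  norm_num at h4
  apply coeff_zero_of_order (n := 4) h4
  rw [weight_eval]; simpa using hd

lemma cube_low2 {φ : M4} (h0 : coeff 0 φ = 0) (ht : coeff (single 3 1) φ = 0)
    {d : Fin 4 →₀ ℕ} (hd : 2*(d 0) + 2*(d 1) + 2*(d 2) + d 3 < 6) :
    coeff d (φ*φ*φ) = 0 := by
  have h2 := order2221_ge h0 ht
  have h6 := order_mul_ge (order_mul_ge h2 h2) h2
  norm_num at h6
  apply coeff_zero_of_order (n := 6) h6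
  rw [weight_eval]
  have e0 : (![2,2,2,1] : Fin 4 → ℕ) 0 = 2 := rfl
  have e1 : (![2,2,2,1] : Fin 4 → ℕ) 1 = 2 := rfl
  have e2 : (![2,2,2,1] : Fin 4 → ℕ) 2 = 2 := rfl
  have e3 : (![2,2,2,1] : Fin 4 → ℕ) 3 = 1 := rfl
  rw [e0, e1, e2, e3]
  omega


lemma sum4_single (v : Fin 4) (p : ℕ) :
    (single v p : Fin 4 →₀ ℕ) 0 + (single v p) 1 + (single v p) 2 + (single v p) 3 = p := by
  fin_cases v <;> simp (config := { decide := true }) [Finsupp.single_apply]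

lemma cube_low_t {φ : M4} (h : coeff 0 φ = 0) (q : ℕ) (hq : q < 3) :
    coeff (single 3 q) (φ*φ*φ) = 0 := by
  apply cube_low h
  have h1 := sum4_single 3 q
  omega

lemma cube_low_p {φ : M4} (h : coeff 0 φ = 0) (v : Fin 4) (p q : ℕ) (hpq : p + q < 3) :
    coeff (single v p + single 3 q) (φ*φ*φ) = 0 := by
  apply cube_low h
  have h1 := sum4_single v p
  have h2 := sum4_single 3 q
  simp only [Finsupp.add_apply]
  omega

lemma quart_low_t {φ : M4} (h : coeff 0 φ = 0) (q : ℕ) (hq : q < 4) :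
    coeff (single 3 q) (φ*φ*(φ*φ)) = 0 := by
  apply quart_low h
  have h1 := sum4_single 3 q
  omega

lemma quart_low_p {φ : M4} (h : coeff 0 φ = 0) (v : Fin 4) (p q : ℕ) (hpq : p + q < 4) :
    coeff (single v p + single 3 q) (φ*φ*(φ*φ)) = 0 := by
  apply quart_low h
  have h1 := sum4_single v p
  have h2 := sum4_single 3 q
  simp only [Finsupp.add_apply]
  omega

lemma quart_low_z2 {φ : M4} (h : coeff 0 φ = 0) :
    coeff (single 2 2) (φ*φ*(φ*φ)) = 0 := by
  have := quart_low_p h 2 2 0 (by norm_num)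
  simpa using this

lemma cube2_low_t {φ : M4} (h0 : coeff 0 φ = 0) (ht : coeff (single 3 1) φ = 0)
    (q : ℕ) (hq : q < 6) : coeff (single 3 q) (φ*φ*φ) = 0 := by
  apply cube_low2 h0 ht
  have e0 : (single (3:Fin 4) q : Fin 4 →₀ ℕ) 0 = 0 := Finsupp.single_eq_of_ne' (by decide)
  have e1 : (single (3:Fin 4) q : Fin 4 →₀ ℕ) 1 = 0 := Finsupp.single_eq_of_ne' (by decide)
  have e2 : (single (3:Fin 4) q : Fin 4 →₀ ℕ) 2 = 0 := Finsupp.single_eq_of_ne' (by decide)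
  have e3 : (single (3:Fin 4) q : Fin 4 →₀ ℕ) 3 = q := Finsupp.single_eq_same
  omega

lemma cube2_low_p {φ : M4} (h0 : coeff 0 φ = 0) (ht : coeff (single 3 1) φ = 0)
    (v : Fin 4) (hv : v ≠ 3) (p q : ℕ) (hpq : 2*p + q < 6) :
    coeff (single v p + single 3 q) (φ*φ*φ) = 0 := by
  apply cube_low2 h0 ht
  simp only [Finsupp.add_apply]
  have hs := sum4_single v p
  have hv3 : (single v p : Fin 4 →₀ ℕ) 3 = 0 := Finsupp.single_eq_of_ne' hv
  have e0 : (single (3:Fin 4) q : Fin 4 →₀ ℕ) 0 = 0 := Finsupp.single_eq_of_ne' (by decide)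
  have e1 : (single (3:Fin 4) q : Fin 4 →₀ ℕ) 1 = 0 := Finsupp.single_eq_of_ne' (by decide)
  have e2 : (single (3:Fin 4) q : Fin 4 →₀ ℕ) 2 = 0 := Finsupp.single_eq_of_ne' (by decide)
  have e3 : (single (3:Fin 4) q : Fin 4 →₀ ℕ) 3 = q := Finsupp.single_eq_same
  omega

lemma cube2_low_z2 {φ : M4} (h0 : coeff 0 φ = 0) (ht : coeff (single 3 1) φ = 0) :
    coeff (single 2 2) (φ*φ*φ) = 0 := by
  have := cube2_low_p h0 ht 2 (by decide) 2 0 (by norm_num)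
  simpa using this

lemma coeff_X_same (i : Fin 4) : coeff (single i 1) (X i : M4) = 1 := by
  simp [MvPowerSeries.coeff_X]

lemma coeff_X_ne {k i : Fin 4} (h : k ≠ i) : coeff (single k 1) (X i : M4) = 0 := by
  simp [MvPowerSeries.X, MvPowerSeries.coeff_monomial, Finsupp.single_eq_single_iff, h]

lemma const0_map (Φ : M4 ≃ₐ[ℂ] M4) {φ : M4} (h : coeff 0 φ = 0) :
    coeff 0 (Φ φ) = 0 := by
  by_contra hc
  have h1 : IsUnit (Φ φ) := by
    rw [MvPowerSeries.isUnit_iff_constantCoeff]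
    exact isUnit_iff_ne_zero.mpr (by simpa [MvPowerSeries.coeff_zero_eq_constantCoeff] using hc)
  have h2 : IsUnit φ := by
    have := h1.map Φ.symm
    simpa using this
  rw [MvPowerSeries.isUnit_iff_constantCoeff] at h2
  rw [MvPowerSeries.coeff_zero_eq_constantCoeff] at h
  simp [h] at h2

lemma const0_X (i : Fin 4) : coeff 0 (X i : M4) = 0 := by
  simp [MvPowerSeries.coeff_zero_eq_constantCoeff, constantCoeff_X]

lemma key_lin (Φ : M4 ≃ₐ[ℂ] M4) (h : M4) (h0 : coeff 0 h = 0)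
    (hlin : ∀ i, coeff (single i 1) h = 0) (k : Fin 4) :
    coeff (single k 1) (Φ h) = 0 := by
  obtain ⟨r, hr, hrc⟩ := split_lemma h h0
  have hXc : ∀ i : Fin 4, coeff 0 (Φ (X i)) = 0 := fun i => const0_map Φ (const0_X i)
  have hrc0 : ∀ i, coeff 0 (Φ (r i)) = 0 := fun i => const0_map Φ (by rw [hrc i, hlin i])
  rw [hr]
  simp only [map_sum, map_mul]
  apply Finset.sum_eq_zero
  intro i _
  rw [cf_lin, hXc i, hrc0 i, zero_mul, mul_zero, add_zero]

lemma not_all_t (Φ : M4 ≃ₐ[ℂ] M4)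
    (hall : ∀ i : Fin 4, coeff (single 3 1) (Φ.symm (X i)) = 0) : False := by
  have hF0 : coeff 0 (Φ (X 3)) = 0 := const0_map Φ (const0_X 3)
  obtain ⟨r, hr, -⟩ := split_lemma (Φ (X 3)) hF0
  have h3 : (X 3 : M4) = ∑ i, Φ.symm (X i) * Φ.symm (r i) := by
    have h := congrArg Φ.symm hr
    simpa only [AlgEquiv.symm_apply_apply, map_sum, map_mul] using h
  have hc := congrArg (coeff (single 3 1)) h3
  rw [map_sum, Finset.sum_eq_zero] at hc
  · simpa [MvPowerSeries.coeff_X] using hc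
  · intro i _
    rw [cf_lin, hall i, const0_map Φ.symm (const0_X i), zero_mul, zero_mul, add_zero]


lemma core (Φ : M4 ≃ₐ[ℂ] M4)
    (hlow : ∀ d : Fin 4 →₀ ℕ, weight ![4,3,2,1] d < 6 →
      coeff d (Φ.symm (X 0) * Φ.symm (X 0) * Φ.symm (X 0)
        + Φ.symm (X 1) * Φ.symm (X 1) * (Φ.symm (X 1) * Φ.symm (X 1))
        + Φ.symm (X 2) * Φ.symm (X 2) + Φ.symm (X 3) * Φ.symm (X 3)) = 0)
    (hxt2 : coeff (single 0 1 + single 3 2)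
      (Φ.symm (X 0) * Φ.symm (X 0) * Φ.symm (X 0)
        + Φ.symm (X 1) * Φ.symm (X 1) * (Φ.symm (X 1) * Φ.symm (X 1))
        + Φ.symm (X 2) * Φ.symm (X 2) + Φ.symm (X 3) * Φ.symm (X 3)) = 0) : False := by
  set p0 := Φ.symm (X 0) with hp0
  set p1 := Φ.symm (X 1) with hp1
  set p2 := Φ.symm (X 2) with hp2
  set p3 := Φ.symm (X 3) with hp3
  have hc0 : coeff 0 p0 = 0 := by rw [hp0]; exact const0_map Φ.symm (const0_X 0)
  have hc1 : coeff 0 p1 = 0 := by rw [hp1]; exact const0_map Φ.symm (const0_X 1)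
  have hc2 : coeff 0 p2 = 0 := by rw [hp2]; exact const0_map Φ.symm (const0_X 2)
  have hc3 : coeff 0 p3 = 0 := by rw [hp3]; exact const0_map Φ.symm (const0_X 3)
  have w0 : (![4,3,2,1] : Fin 4 → ℕ) 0 = 4 := rfl
  have w1 : (![4,3,2,1] : Fin 4 → ℕ) 1 = 3 := rfl
  have w2 : (![4,3,2,1] : Fin 4 → ℕ) 2 = 2 := rfl
  have w3 : (![4,3,2,1] : Fin 4 → ℕ) 3 = 1 := rfl
  have E1 : coeff (single 3 1) p2 * coeff (single 3 1) p2
      + coeff (single 3 1) p3 * coeff (single 3 1) p3 = 0 := by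
    have h := hlow (single 3 2) (by rw [wt_single, w3]; norm_num)
    simp only [map_add] at h
    rw [cube_low_t hc0 2 (by norm_num), quart_low_t hc1 2 (by norm_num),
      cf_t2 hc2 hc2, cf_t2 hc3 hc3] at h
    linear_combination h
  by_cases hA : coeff (single 3 1) p2 = 0 ∧ coeff (single 3 1) p3 = 0
  · -- CASE A
    obtain ⟨hA2, hA3⟩ := hA
    have hE2 : coeff (single 3 1) p0 = 0 := by
      have h := hlow (single 3 3) (by rw [wt_single, w3]; norm_num)
      simp only [map_add] at h
      rw [cf_t3 (by rw [const0_mul, hc0, zero_mul]) hc0] at h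
      rw [cf_lin, cf_t2 hc0 hc0] at h
      rw [quart_low_t hc1 3 (by norm_num)] at h
      rw [cf_t3 hc2 hc2, cf_t3 hc3 hc3] at h
      rw [hc0, hA2, hA3] at h
      have h3 : coeff (single 3 1) p0 ^ 3 = 0 := by linear_combination h
      exact pow_eq_zero_iff (by norm_num) |>.mp h3
    have hc1t : coeff (single 3 1) p1 ≠ 0 := by
      intro hz
      apply not_all_t Φ
      intro i
      fin_cases i
      · exact hE2
      · exact hz
      · exact hA2
      · exact hA3
    have E3 : coeff (single 2 1) p2 * coeff (single 2 1) p2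
        + coeff (single 2 1) p3 * coeff (single 2 1) p3 = 0 := by
      have h := hlow (single 2 2) (by rw [wt_single, w2]; norm_num)
      simp only [map_add] at h
      rw [cube2_low_z2 hc0 hE2, quart_low_z2 hc1, cf_z2 hc2 hc2, cf_z2 hc3 hc3] at h
      linear_combination h
    have E4 : coeff (single 2 1) p2 * coeff (single 3 2) p2
        + coeff (single 2 1) p3 * coeff (single 3 2) p3 = 0 := by
      have h := hlow (single 2 1 + single 3 2)
        (by rw [map_add, wt_single, wt_single, w2, w3]; norm_num)
      simp only [map_add] at h
      rw [cube2_low_p hc0 hE2 2 (by decide) 1 2 (by norm_num),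
        quart_low_p hc1 2 1 2 (by norm_num),
        cf_kt2 hc2 hc2 (by decide), cf_kt2 hc3 hc3 (by decide), hA2, hA3] at h
      linear_combination h / 2
    have E5 : coeff (single 3 2) p2 * coeff (single 3 2) p2
        + coeff (single 3 2) p3 * coeff (single 3 2) p3
        + coeff (single 3 1) p1 ^ 4 = 0 := by
      have h := hlow (single 3 4) (by rw [wt_single, w3]; norm_num)
      simp only [map_add] at h
      rw [cube2_low_t hc0 hE2 4 (by norm_num)] at h
      rw [cf_t4 (by rw [const0_mul, hc1, zero_mul]) (by rw [const0_mul, hc1, zero_mul])] at h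
      rw [cf_t4 hc2 hc2, cf_t4 hc3 hc3] at h
      simp only [cf_lin, cf_t2 hc1 hc1, cf_t3 hc1 hc1, hc1, hA2, hA3,
        zero_mul, mul_zero, add_zero, zero_add] at h
      linear_combination h
    have E6a : coeff (single 3 2) p2 * coeff (single 1 1) p2
        + coeff (single 3 2) p3 * coeff (single 1 1) p3 = 0 := by
      have h := hlow (single 1 1 + single 3 2)
        (by rw [map_add, wt_single, wt_single, w1, w3]; norm_num)
      simp only [map_add] at h
      rw [cube2_low_p hc0 hE2 1 (by decide) 1 2 (by norm_num),
        quart_low_p hc1 1 1 2 (by norm_num),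
        cf_kt2 hc2 hc2 (by decide), cf_kt2 hc3 hc3 (by decide), hA2, hA3] at h
      linear_combination h / 2
    have E6b : coeff (single 3 2) p2 * coeff (single 0 1) p2
        + coeff (single 3 2) p3 * coeff (single 0 1) p3 = 0 := by
      have h := hxt2
      simp only [map_add] at h
      rw [cube2_low_p hc0 hE2 0 (by decide) 1 2 (by norm_num),
        quart_low_p hc1 0 1 2 (by norm_num),
        cf_kt2 hc2 hc2 (by decide), cf_kt2 hc3 hc3 (by decide), hA2, hA3] at h
      linear_combination h / 2
    set a2 := coeff (single 2 1) p2 with ha2d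
    set a3 := coeff (single 2 1) p3 with ha3d
    set b2 := coeff (single 3 2) p2 with hb2d
    set b3 := coeff (single 3 2) p3 with hb3d
    have hbb : b2 * b2 + b3 * b3 ≠ 0 := by
      intro hz
      exact (pow_ne_zero 4 hc1t) (by linear_combination E5 - hz)
    have hcross : a2 * b3 - a3 * b2 = 0 := by
      have hsq : (a2 * b3 - a3 * b2)^2 = 0 := by
        linear_combination (b2*b2 + b3*b3) * E3 - (a2*b2 + a3*b3) * E4
      exact pow_eq_zero_iff (two_ne_zero) |>.mp hsq
    have ha2 : a2 = 0 := by
      rcases mul_eq_zero.mp (show a2 * (b2*b2 + b3*b3) = 0 by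
        linear_combination b2 * E4 + b3 * hcross) with h | h
      · exact h
      · exact absurd h hbb
    have ha3 : a3 = 0 := by
      rcases mul_eq_zero.mp (show a3 * (b2*b2 + b3*b3) = 0 by
        linear_combination b3 * E4 - b2 * hcross) with h | h
      · exact h
      · exact absurd h hbb
    set H := (C (σ := Fin 4) (R := ℂ)) b2 * p2 + (C (σ := Fin 4) (R := ℂ)) b3 * p3 with hH
    have hH0 : coeff 0 H = 0 := by
      rw [hH, map_add, MvPowerSeries.coeff_C_mul, MvPowerSeries.coeff_C_mul, hc2, hc3]
      ring
    have hHlin : ∀ i, coeff (single i 1) H = 0 := by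
      intro i
      rw [hH, map_add, MvPowerSeries.coeff_C_mul, MvPowerSeries.coeff_C_mul]
      fin_cases i
      · exact E6b
      · exact E6a
      · show b2 * a2 + b3 * a3 = 0
        rw [ha2, ha3]; ring
      · show b2 * coeff (single 3 1) p2 + b3 * coeff (single 3 1) p3 = 0
        rw [hA2, hA3]; ring
    have hk2 := key_lin Φ H hH0 hHlin 2
    have hk3 := key_lin Φ H hH0 hHlin 3
    have hΦH : Φ H = (C (σ := Fin 4) (R := ℂ)) b2 * X 2 + (C (σ := Fin 4) (R := ℂ)) b3 * X 3 := by
      rw [hH, hp2, hp3, map_add, map_mul, map_mul, AlgEquiv.apply_symm_apply,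
        AlgEquiv.apply_symm_apply,
        show Φ ((C (σ := Fin 4) (R := ℂ)) b2) = (C (σ := Fin 4) (R := ℂ)) b2 from Φ.commutes b2,
        show Φ ((C (σ := Fin 4) (R := ℂ)) b3) = (C (σ := Fin 4) (R := ℂ)) b3 from Φ.commutes b3]
    rw [hΦH, map_add, MvPowerSeries.coeff_C_mul, MvPowerSeries.coeff_C_mul,
      coeff_X_same, coeff_X_ne (by decide), mul_one, mul_zero, add_zero] at hk2
    rw [hΦH, map_add, MvPowerSeries.coeff_C_mul, MvPowerSeries.coeff_C_mul,
      coeff_X_ne (by decide), coeff_X_same, mul_one, mul_zero, zero_add] at hk3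
    exact hbb (by rw [hk2, hk3]; ring)
  · -- CASE B
    obtain ⟨j, hj, hA0, hτ⟩ : ∃ j : ℂ, j * j = -1
        ∧ coeff (single 3 1) p2 + j * coeff (single 3 1) p3 = 0
        ∧ coeff (single 3 1) p2 - j * coeff (single 3 1) p3 ≠ 0 := by
      have hfac : (coeff (single 3 1) p2 + Complex.I * coeff (single 3 1) p3)
          * (coeff (single 3 1) p2 - Complex.I * coeff (single 3 1) p3) = 0 := by
        linear_combination E1 - coeff (single 3 1) p3 * coeff (single 3 1) p3
          * Complex.I_mul_I
      rcases mul_eq_zero.mp hfac with h | h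
      · refine ⟨Complex.I, Complex.I_mul_I, h, fun h' => hA ⟨by linear_combination (h + h') / 2, ?_⟩⟩
        have h2 : (2 * Complex.I) * coeff (single 3 1) p3 = 0 := by linear_combination h - h'
        rcases mul_eq_zero.mp h2 with hz | hz
        · exact absurd hz (by simp [Complex.I_ne_zero])
        · exact hz
      · refine ⟨-Complex.I, by linear_combination Complex.I_mul_I, by linear_combination h,
          fun h' => hA ⟨by linear_combination (h + h') / 2, ?_⟩⟩
        have h2 : (2 * Complex.I) * coeff (single 3 1) p3 = 0 := by linear_combination h' - h
        rcases mul_eq_zero.mp h2 with hz | hz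
        · exact absurd hz (by simp [Complex.I_ne_zero])
        · exact hz
    set A := p2 + (C (σ := Fin 4) (R := ℂ)) j * p3 with hAdef
    set B := p2 - (C (σ := Fin 4) (R := ℂ)) j * p3 with hBdef
    have hCC : (C (σ := Fin 4) (R := ℂ)) j * (C (σ := Fin 4) (R := ℂ)) j = -1 := by
      rw [← map_mul, hj, map_neg, map_one]
    have hABmul : p2 * p2 + p3 * p3 = A * B := by
      rw [hAdef, hBdef]; linear_combination (p3 * p3) * hCC
    have hA0c : coeff 0 A = 0 := by
      rw [hAdef, map_add, MvPowerSeries.coeff_C_mul, hc2, hc3]; ring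
    have hB0c : coeff 0 B = 0 := by
      rw [hBdef, map_sub, MvPowerSeries.coeff_C_mul, hc2, hc3]; ring
    have hAt : coeff (single 3 1) A = 0 := by
      rw [hAdef, map_add, MvPowerSeries.coeff_C_mul]; exact hA0
    have hBt : coeff (single 3 1) B
        = coeff (single 3 1) p2 - j * coeff (single 3 1) p3 := by
      rw [hBdef, map_sub, MvPowerSeries.coeff_C_mul]
    have hAk : ∀ (v : Fin 4), v ≠ 3 → coeff (single v 1) A = 0 := by
      intro v hv
      have h := hlow (single v 1 + single 3 1)
        (by rw [map_add, wt_single, wt_single, w3]; fin_cases v <;> decide)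
      simp only [map_add] at h
      rw [cube_low_p hc0 v 1 1 (by norm_num), quart_low_p hc1 v 1 1 (by norm_num)] at h
      simp only [zero_add] at h
      rw [← map_add, hABmul] at h
      rw [cf_kt hA0c hB0c hv, hAt, zero_mul, zero_add] at h
      rcases mul_eq_zero.mp h with h' | h'
      · exact h'
      · rw [hBt] at h'
        exact absurd h' hτ
    have hk := key_lin Φ A hA0c (fun i => by
      by_cases hi : i = 3
      · subst hi; exact hAt
      · exact hAk i hi) 2
    have hΦA : Φ A = X 2 + (C (σ := Fin 4) (R := ℂ)) j * X 3 := by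
      rw [hAdef, hp2, hp3, map_add, map_mul, AlgEquiv.apply_symm_apply,
        AlgEquiv.apply_symm_apply,
        show Φ ((C (σ := Fin 4) (R := ℂ)) j) = (C (σ := Fin 4) (R := ℂ)) j from Φ.commutes j]
    rw [hΦA, map_add, MvPowerSeries.coeff_C_mul, coeff_X_same, coeff_X_ne (by decide)] at hk
    simp at hk

end Stmt9Aux

/-- if `wt f = 6` w.r.t. the weights `(4,3,2,1)` for `(x,y,z,t)` and `f` defines
an `E₆`-singularity (is contact equivalent to `x³ + y⁴ + z² + t²`), then the coefficient of
the monomial `xt²` in `f` is non-zero. -/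
theorem stmt9 (f : MvPowerSeries (Fin 4) ℂ)
    (hwt : f.weightedOrder ![4, 3, 2, 1] = (6 : ℕ∞))
    (hE6 : ContactEquiv f
      ((X 0 : MvPowerSeries (Fin 4) ℂ) ^ 3 + X 1 ^ 4 + X 2 ^ 2 + X 3 ^ 2)) :
    MvPowerSeries.coeff
      (Finsupp.single (0 : Fin 4) 1 + Finsupp.single (3 : Fin 4) 2) f ≠ 0 := by
  intro hlam
  obtain ⟨Φ, u, hu⟩ := hE6
  haveI hnt : Finsupp.NonTorsionWeight ℕ (![4,3,2,1] : Fin 4 → ℕ) :=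
    Finsupp.nonTorsionWeight_of ℕ (w := ![4,3,2,1]) (by decide)
  have hflow : ∀ d : Fin 4 →₀ ℕ, Finsupp.weight ![4,3,2,1] d < 6 →
      MvPowerSeries.coeff d f = 0 := fun d hd =>
    coeff_eq_zero_of_lt_weightedOrder _ (by rw [hwt]; exact_mod_cast hd)
  have h2 := congrArg Φ.symm hu
  rw [map_add, map_add, map_add, map_pow, map_pow, map_pow, map_pow, map_mul,
    AlgEquiv.symm_apply_apply] at h2
  have hGf : Φ.symm (X 0) * Φ.symm (X 0) * Φ.symm (X 0)
      + Φ.symm (X 1) * Φ.symm (X 1) * (Φ.symm (X 1) * Φ.symm (X 1))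
      + Φ.symm (X 2) * Φ.symm (X 2) + Φ.symm (X 3) * Φ.symm (X 3)
      = Φ.symm ↑u * f := by rw [← h2]; ring
  have htrans : ∀ d : Fin 4 →₀ ℕ, Finsupp.weight ![4,3,2,1] d ≤ 6 →
      MvPowerSeries.coeff d f = 0 →
      MvPowerSeries.coeff d (Φ.symm (X 0) * Φ.symm (X 0) * Φ.symm (X 0)
        + Φ.symm (X 1) * Φ.symm (X 1) * (Φ.symm (X 1) * Φ.symm (X 1))
        + Φ.symm (X 2) * Φ.symm (X 2) + Φ.symm (X 3) * Φ.symm (X 3)) = 0 := by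
    intro d hd hfd
    rw [hGf, coeff_mul]
    apply Finset.sum_eq_zero
    rintro ⟨a, b⟩ hab
    rw [Finset.HasAntidiagonal.mem_antidiagonal] at hab
    by_cases ha : a = 0
    · have hb : b = d := by rw [ha, zero_add] at hab; exact hab
      rw [hb, hfd, mul_zero]
    · have h1 : Finsupp.weight ![4,3,2,1] a ≠ 0 :=
        fun hz => ha ((Finsupp.weight_eq_zero_iff_eq_zero (![4,3,2,1] : Fin 4 → ℕ)).mp hz)
      have hadd : Finsupp.weight ![4,3,2,1] a + Finsupp.weight ![4,3,2,1] b
          = Finsupp.weight ![4,3,2,1] d := by rw [← map_add, hab]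
      have hb6 : Finsupp.weight ![4,3,2,1] b < 6 := by omega
      rw [hflow b hb6, mul_zero]
  exact Stmt9Aux.core Φ
    (fun d hd => htrans d (le_of_lt hd) (hflow d hd))
    (htrans _ (by rw [map_add, Stmt9Aux.wt_single, Stmt9Aux.wt_single]; decide) hlam)
end
end

section
/- Let f ∈ ℂ[[x,y,z,t]] be such that, with respect to the weights (1,5,3,2) for (x,y,z,t), one has wt f = 6, and such that f is contact equivalent to x³ + y² + z² + t² (i.e. f defines an A₂-singularity). Then the coefficient of the monomial xy in f is non-zero. -/
noncomputable section

open MvPowerSeries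

namespace Stmt10Aux

open Finsupp

abbrev R4 := MvPowerSeries (Fin 4) ℂ

local notation "cf" => MvPowerSeries.coeff (R := ℂ)
local notation "cc" => MvPowerSeries.constantCoeff (σ := Fin 4) (R := ℂ)

lemma coeff_single_mul (p q : R4) (k : Fin 4) (n : ℕ) :
    cf (single k n) (p*q) =
      ∑ ij ∈ Finset.HasAntidiagonal.antidiagonal n, cf (single k ij.1) p * cf (single k ij.2) q := by
  rw [MvPowerSeries.coeff_mul, Finsupp.antidiagonal_single, Finset.sum_map]
  simp

lemma cs1 (p q : R4) (hp : cc p = 0) (hq : cc q = 0) (k : Fin 4) :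
    cf (single k 1) (p * q) = 0 := by
  rw [coeff_single_mul, show Finset.HasAntidiagonal.antidiagonal (1:ℕ) = {(0,1),(1,0)} from by decide,
    Finset.sum_insert (by decide), Finset.sum_singleton]
  simp [Finsupp.single_zero, coeff_zero_eq_constantCoeff, hp, hq]

lemma cs2 (p : R4) (hp : cc p = 0) (k : Fin 4) :
    cf (single k 2) (p * p) = (cf (single k 1) p)^2 := by
  rw [coeff_single_mul, show Finset.HasAntidiagonal.antidiagonal (2:ℕ) = {(0,2),(1,1),(2,0)} from by decide,
    Finset.sum_insert (by decide), Finset.sum_insert (by decide), Finset.sum_singleton]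
  simp [Finsupp.single_zero, coeff_zero_eq_constantCoeff, hp]
  ring

lemma cs3 (p : R4) (hp : cc p = 0) (k : Fin 4) :
    cf (single k 3) (p * p) = 2 * (cf (single k 1) p * cf (single k 2) p) := by
  rw [coeff_single_mul, show Finset.HasAntidiagonal.antidiagonal (3:ℕ) = {(0,3),(1,2),(2,1),(3,0)} from by decide,
    Finset.sum_insert (by decide), Finset.sum_insert (by decide),
    Finset.sum_insert (by decide), Finset.sum_singleton]
  simp [Finsupp.single_zero, coeff_zero_eq_constantCoeff, hp]
  ring

lemma ccube2 (p : R4) (hp : cc p = 0) (k : Fin 4) :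
    cf (single k 2) (p * p * p) = 0 := by
  rw [coeff_single_mul, show Finset.HasAntidiagonal.antidiagonal (2:ℕ) = {(0,2),(1,1),(2,0)} from by decide,
    Finset.sum_insert (by decide), Finset.sum_insert (by decide), Finset.sum_singleton]
  simp [Finsupp.single_zero, coeff_zero_eq_constantCoeff, hp, map_mul, cs1 p p hp hp]

lemma ccube3 (p : R4) (hp : cc p = 0) (k : Fin 4) :
    cf (single k 3) (p * p * p) = (cf (single k 1) p)^3 := by
  rw [coeff_single_mul, show Finset.HasAntidiagonal.antidiagonal (3:ℕ) = {(0,3),(1,2),(2,1),(3,0)} from by decide,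
    Finset.sum_insert (by decide), Finset.sum_insert (by decide),
    Finset.sum_insert (by decide), Finset.sum_singleton]
  simp [Finsupp.single_zero, coeff_zero_eq_constantCoeff, hp, map_mul, cs1 p p hp hp, cs2 p hp]
  ring

lemma eq_pair {i j : Fin 4} (hij : i ≠ j) (m : Fin 4 →₀ ℕ)
    (hm : ∀ k, k ≠ i → k ≠ j → m k = 0) :
    m = single i (m i) + single j (m j) := by
  ext k
  rcases eq_or_ne k i with rfl | hki
  · simp [Finsupp.single_apply, hij.symm]
  rcases eq_or_ne k j with rfl | hkj
  · simp [Finsupp.single_apply, hij, hki.symm]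
  · simp [Finsupp.single_apply, hm k hki hkj, Ne.symm hki, Ne.symm hkj]

lemma decomp_two {i j : Fin 4} (hij : i ≠ j) {m1 m2 : Fin 4 →₀ ℕ}
    (h : m1 + m2 = single i 1 + single j 1) :
    (m1 = 0 ∧ m2 = single i 1 + single j 1) ∨ (m1 = single i 1 ∧ m2 = single j 1) ∨
    (m1 = single j 1 ∧ m2 = single i 1) ∨ (m1 = single i 1 + single j 1 ∧ m2 = 0) := by
  have hk : ∀ k, m1 k + m2 k = (single i 1) k + (single j 1) k := by
    intro k
    have := DFunLike.congr_fun h k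
    simpa using this
  have hi := hk i
  have hj := hk j
  rw [Finsupp.single_eq_same, Finsupp.single_eq_of_ne' hij.symm] at hi
  rw [Finsupp.single_eq_same, Finsupp.single_eq_of_ne' hij] at hj
  have hoth : ∀ k, k ≠ i → k ≠ j → m1 k = 0 ∧ m2 k = 0 := by
    intro k hki hkj
    have := hk k
    rw [Finsupp.single_eq_of_ne' (Ne.symm hki), Finsupp.single_eq_of_ne' (Ne.symm hkj)] at this
    omega
  have e1 : m1 = single i (m1 i) + single j (m1 j) :=
    eq_pair hij m1 (fun k h1 h2 => (hoth k h1 h2).1)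
  have e2 : m2 = single i (m2 i) + single j (m2 j) :=
    eq_pair hij m2 (fun k h1 h2 => (hoth k h1 h2).2)
  have hb1 : m1 i = 0 ∨ m1 i = 1 := by omega
  have hb2 : m1 j = 0 ∨ m1 j = 1 := by omega
  rcases hb1 with h1 | h1
  · rcases hb2 with h2 | h2
    · left
      constructor
      · rw [e1, h1, h2]; simp
      · rw [e2, show m2 i = 1 by omega, show m2 j = 1 by omega]
    · right; right; left
      constructor
      · rw [e1, h1, h2]; simp
      · rw [e2, show m2 i = 1 by omega, show m2 j = 0 by omega]; simp
  · rcases hb2 with h2 | h2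
    · right; left
      constructor
      · rw [e1, h1, h2]; simp
      · rw [e2, show m2 i = 0 by omega, show m2 j = 1 by omega]; simp
    · right; right; right
      constructor
      · rw [e1, h1, h2]
      · rw [e2, show m2 i = 0 by omega, show m2 j = 0 by omega]; simp

lemma single_add_single_ne_single {i j : Fin 4} (hij : i ≠ j) :
    single i 1 + single j 1 ≠ single i (1:ℕ) := by
  intro h
  have := DFunLike.congr_fun h j
  simp [Finsupp.single_eq_of_ne hij, Finsupp.single_eq_of_ne hij.symm] at this

lemma single_add_single_ne_zero {i j : Fin 4} (hij : i ≠ j) :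
    single i 1 + single j 1 ≠ (0 : Fin 4 →₀ ℕ) := by
  intro h
  have := DFunLike.congr_fun h i
  simp [Finsupp.single_eq_of_ne hij.symm] at this

lemma cmix (p q : R4) (hp : cc p = 0) (hq : cc q = 0) {i j : Fin 4} (hij : i ≠ j) :
    cf (single i 1 + single j 1) (p * q) =
      cf (single i 1) p * cf (single j 1) q + cf (single j 1) p * cf (single i 1) q := by
  classical
  have hadd : single j (1:ℕ) + single i 1 = single i 1 + single j 1 := add_comm _ _
  have hset : Finset.HasAntidiagonal.antidiagonal (single i (1:ℕ) + single j 1) =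
      {((0 : Fin 4 →₀ ℕ), single i 1 + single j 1), (single i 1, single j 1),
       (single j 1, single i 1), (single i 1 + single j 1, (0 : Fin 4 →₀ ℕ))} := by
    ext ⟨m1, m2⟩
    simp only [Finset.HasAntidiagonal.mem_antidiagonal, Finset.mem_insert, Finset.mem_singleton, Prod.mk.injEq]
    constructor
    · intro h
      rcases decomp_two hij h with ⟨h1, h2⟩ | ⟨h1, h2⟩ | ⟨h1, h2⟩ | ⟨h1, h2⟩ <;> tauto
    · rintro (⟨rfl, rfl⟩ | ⟨rfl, rfl⟩ | ⟨rfl, rfl⟩ | ⟨rfl, rfl⟩) <;>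
        simp [add_comm]
  have hne1 : Finsupp.single i (1:ℕ) ≠ single j 1 := by
    intro h
    rcases (Finsupp.single_eq_single_iff _ _ _ _).mp h with ⟨h1, _⟩ | ⟨h1, _⟩
    · exact hij h1
    · exact one_ne_zero h1
  rw [MvPowerSeries.coeff_mul, hset]
  rw [Finset.sum_insert (by
        simp only [Finset.mem_insert, Finset.mem_singleton, Prod.mk.injEq, not_or]
        refine ⟨?_, ?_, ?_⟩
        · intro h; exact (fun hz => one_ne_zero (Finsupp.single_eq_zero.mp hz)) h.1.symm
        · intro h; exact (fun hz => one_ne_zero (Finsupp.single_eq_zero.mp hz)) h.1.symm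
        · intro h; exact (single_add_single_ne_zero hij) h.1.symm),
      Finset.sum_insert (by
        simp only [Finset.mem_insert, Finset.mem_singleton, Prod.mk.injEq, not_or]
        refine ⟨?_, ?_⟩
        · intro h; exact hne1 h.1
        · intro h; exact (single_add_single_ne_single hij) h.1.symm),
      Finset.sum_insert (by
        simp only [Finset.mem_singleton, Prod.mk.injEq, not_or]
        intro h
        exact (hadd ▸ single_add_single_ne_single hij.symm) h.1.symm),
      Finset.sum_singleton]
  rw [coeff_zero_eq_constantCoeff_apply, coeff_zero_eq_constantCoeff_apply, hp, hq]
  ring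

lemma ccube_mix (p : R4) (hp : cc p = 0) {i j : Fin 4} (hij : i ≠ j) :
    cf (single i 1 + single j 1) (p * p * p) = 0 := by
  rw [cmix (p*p) p (by rw [map_mul, hp, zero_mul]) hp hij,
    cs1 p p hp hp, cs1 p p hp hp]
  ring

/-! ### Decomposition of a series with zero constant and linear terms -/

def Fres (i : Fin 4) (s : R4) : R4 := fun m => if m i = 0 then s m else 0

lemma coeff_Fres (i : Fin 4) (s : R4) (m : Fin 4 →₀ ℕ) :
    cf m (Fres i s) = if m i = 0 then cf m s else 0 := rfl

lemma coeff_X_mul_single (i : Fin 4) (g : R4) :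
    cf (single i 1) ((X i : R4) * g) = cc g := by
  rw [coeff_single_mul, show Finset.HasAntidiagonal.antidiagonal (1:ℕ) = {(0,1),(1,0)} from by decide,
    Finset.sum_insert (by decide), Finset.sum_singleton]
  simp [Finsupp.single_zero, coeff_zero_eq_constantCoeff, MvPowerSeries.coeff_index_single_X]

lemma exists_Fres_decomp (i : Fin 4) (s : R4) :
    ∃ g : R4, s = Fres i s + X i * g ∧ cc g = cf (single i 1) s := by
  have hdvd : (X i : R4) ∣ (s - Fres i s) := by
    rw [MvPowerSeries.X_dvd_iff]
    intro m hm
    rw [map_sub, coeff_Fres, if_pos hm, sub_self]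
  obtain ⟨g, hg⟩ := hdvd
  refine ⟨g, by rw [← hg]; ring, ?_⟩
  have h2 : cf (single i 1) (s - Fres i s) = cf (single i 1) s := by
    rw [map_sub, coeff_Fres, if_neg (by simp), sub_zero]
  rw [← coeff_X_mul_single i g, ← hg, h2]

lemma exists_decomp (r : R4) (h0 : cc r = 0) (h1 : ∀ i, cf (single i 1) r = 0) :
    ∃ h : Fin 4 → R4, (∀ i, cc (h i) = 0) ∧ r = ∑ i, X i * h i := by
  obtain ⟨g0, e0, c0⟩ := exists_Fres_decomp 0 r
  obtain ⟨g1, e1, c1⟩ := exists_Fres_decomp 1 (Fres 0 r)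
  obtain ⟨g2, e2, c2⟩ := exists_Fres_decomp 2 (Fres 1 (Fres 0 r))
  obtain ⟨g3, e3, c3⟩ := exists_Fres_decomp 3 (Fres 2 (Fres 1 (Fres 0 r)))
  have hlast : Fres 3 (Fres 2 (Fres 1 (Fres 0 r))) = 0 := by
    ext m
    rw [map_zero]
    by_cases hm : m = 0
    · subst hm
      simp only [coeff_Fres, if_pos rfl]
      simpa using h0
    · have hall : ¬ (m 0 = 0 ∧ m 1 = 0 ∧ m 2 = 0 ∧ m 3 = 0) := by
        rintro ⟨a0, a1, a2, a3⟩
        apply hm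
        ext k
        fin_cases k <;> simpa
      simp only [coeff_Fres]
      split_ifs with h3 h2 h1' h0'
      · exact absurd ⟨h0', h1', h2, h3⟩ hall
      all_goals rfl
  have hc0 : cc g0 = 0 := by rw [c0]; exact h1 0
  have hc1 : cc g1 = 0 := by
    rw [c1, coeff_Fres, if_pos (by simp)]; exact h1 1
  have hc2 : cc g2 = 0 := by
    rw [c2, coeff_Fres, coeff_Fres, if_pos (by simp), if_pos (by simp)]; exact h1 2
  have hc3 : cc g3 = 0 := by
    rw [c3, coeff_Fres, coeff_Fres, coeff_Fres, if_pos (by simp), if_pos (by simp),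
      if_pos (by simp)]; exact h1 3
  refine ⟨![g0, g1, g2, g3], ?_, ?_⟩
  · intro i
    fin_cases i
    · exact hc0
    · exact hc1
    · exact hc2
    · exact hc3
  · rw [Fin.sum_univ_four]
    show r = X 0 * g0 + X 1 * g1 + X 2 * g2 + X 3 * g3
    rw [e0, e1, e2, e3, hlast]
    ring

/-! ### Automorphisms preserve the maximal ideal, and act linearly on linear terms -/

lemma cc_equiv_zero (Θ : R4 ≃ₐ[ℂ] R4) (w : R4) (hw : cc w = 0) : cc (Θ w) = 0 := by
  by_contra h
  have hu : IsUnit (Θ w) := isUnit_iff_constantCoeff.mpr (isUnit_iff_ne_zero.mpr h)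
  have hu2 : IsUnit w := by
    have := hu.map Θ.symm.toAlgHom
    simpa using this
  have := isUnit_constantCoeff w hu2
  rw [hw] at this
  exact (isUnit_iff_ne_zero.mp this) rfl

lemma lin_equiv (Θ : R4 ≃ₐ[ℂ] R4) (w : R4) (hw : cc w = 0) (k : Fin 4) :
    cf (single k 1) (Θ w) = ∑ j, cf (single j 1) w * cf (single k 1) (Θ (X j)) := by
  classical
  set r : R4 := w - ∑ j, cf (single j 1) w • X j with hr
  have hr0 : cc r = 0 := by
    rw [hr, map_sub, hw, map_sum]
    rw [Finset.sum_eq_zero (fun j _ => by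
      rw [MvPowerSeries.smul_eq_C_mul, map_mul, MvPowerSeries.constantCoeff_X, mul_zero]),
      sub_zero]
  have hr1 : ∀ i, cf (single i 1) r = 0 := by
    intro i
    rw [hr, map_sub, map_sum]
    simp only [LinearMap.map_smul]
    rw [Finset.sum_eq_single i]
    · simp [MvPowerSeries.coeff_index_single_X]
    · intro j _ hj
      rw [MvPowerSeries.coeff_index_single_X, if_neg (Ne.symm hj), smul_zero]
    · simp
  obtain ⟨h, hh0, hhr⟩ := exists_decomp r hr0 hr1
  have hwd : w = (∑ j, cf (single j 1) w • X j) + r := by rw [hr]; ring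
  conv_lhs => rw [hwd, map_add, map_sum, map_add]
  have hrzero : cf (single k 1) (Θ r) = 0 := by
    rw [hhr, map_sum, map_sum]
    apply Finset.sum_eq_zero
    intro i _
    rw [map_mul]
    exact cs1 _ _ (cc_equiv_zero Θ _ (MvPowerSeries.constantCoeff_X i))
      (cc_equiv_zero Θ _ (hh0 i)) k
  rw [hrzero, add_zero, map_sum]
  apply Finset.sum_congr rfl
  intro j _
  rw [map_smul, LinearMap.map_smul, smul_eq_mul]

end Stmt10Aux

open Stmt10Aux Finsupp

/-- if `wt f = 6` w.r.t. the weights `(1,5,3,2)` for `(x,y,z,t)` and `f` defines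
an `A₂`-singularity (is contact equivalent to `x³ + y² + z² + t²`), then the coefficient of
the monomial `xy` in `f` is non-zero. -/
theorem stmt10 (f : MvPowerSeries (Fin 4) ℂ)
    (hwt : f.weightedOrder ![1, 5, 3, 2] = (6 : ℕ∞))
    (hA2 : ContactEquiv f
      ((X 0 : MvPowerSeries (Fin 4) ℂ) ^ 3 + X 1 ^ 2 + X 2 ^ 2 + X 3 ^ 2)) :
    MvPowerSeries.coeff (R := ℂ)
      (Finsupp.single (0 : Fin 4) 1 + Finsupp.single (1 : Fin 4) 1) f ≠ 0 := by
  classical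
  intro hxy
  obtain ⟨Φ, u, hg⟩ := hA2
  set wv : Fin 4 → ℕ := ![1, 5, 3, 2] with hwv
  set Ψ : MvPowerSeries (Fin 4) ℂ ≃ₐ[ℂ] MvPowerSeries (Fin 4) ℂ := Φ.symm with hΨ
  set a : R4 := Ψ (X 0) with ha
  set b : R4 := Ψ (X 1) with hb
  set c : R4 := Ψ (X 2) with hc
  set d : R4 := Ψ (X 3) with hd
  set v : R4 := Ψ ((u⁻¹ : (MvPowerSeries (Fin 4) ℂ)ˣ) : MvPowerSeries (Fin 4) ℂ) with hv
  set S : R4 := a * a * a + b * b + c * c + d * d with hS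
  -- f = v * S
  have hfS : f = v * S := by
    have h1 : ((u⁻¹ : (MvPowerSeries (Fin 4) ℂ)ˣ) : MvPowerSeries (Fin 4) ℂ) *
        ((X 0 : MvPowerSeries (Fin 4) ℂ) ^ 3 + X 1 ^ 2 + X 2 ^ 2 + X 3 ^ 2) = Φ f := by
      rw [hg, ← mul_assoc]
      simp
    have h2 : f = Ψ (((u⁻¹ : (MvPowerSeries (Fin 4) ℂ)ˣ) : MvPowerSeries (Fin 4) ℂ) *
        ((X 0 : MvPowerSeries (Fin 4) ℂ) ^ 3 + X 1 ^ 2 + X 2 ^ 2 + X 3 ^ 2)) := by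
      rw [h1, hΨ, AlgEquiv.symm_apply_apply]
    rw [h2, map_mul, hv, map_add, map_add, map_add, map_pow, map_pow, map_pow, map_pow]
    rw [hS, ha, hb, hc, hd]
    ring
  -- the constant coefficients of a,b,c,d vanish
  have hca : MvPowerSeries.constantCoeff (σ := Fin 4) (R := ℂ) a = 0 :=
    cc_equiv_zero Ψ _ (MvPowerSeries.constantCoeff_X 0)
  have hcb : MvPowerSeries.constantCoeff (σ := Fin 4) (R := ℂ) b = 0 :=
    cc_equiv_zero Ψ _ (MvPowerSeries.constantCoeff_X 1)
  have hcc : MvPowerSeries.constantCoeff (σ := Fin 4) (R := ℂ) c = 0 :=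
    cc_equiv_zero Ψ _ (MvPowerSeries.constantCoeff_X 2)
  have hcd : MvPowerSeries.constantCoeff (σ := Fin 4) (R := ℂ) d = 0 :=
    cc_equiv_zero Ψ _ (MvPowerSeries.constantCoeff_X 3)
  -- v is a unit
  have hvu : IsUnit v := ((u⁻¹).isUnit).map Ψ.toAlgHom.toRingHom
  have hv0 : MvPowerSeries.constantCoeff (σ := Fin 4) (R := ℂ) v ≠ 0 :=
    (isUnit_iff_ne_zero.mp (isUnit_constantCoeff v hvu))
  -- coefficients of f of weight < 6 vanish
  have hfcoeff : ∀ e : Fin 4 →₀ ℕ, Finsupp.weight wv e < 6 →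
      MvPowerSeries.coeff (R := ℂ) e f = 0 := by
    intro e he
    apply MvPowerSeries.coeff_eq_zero_of_lt_weightedOrder wv
    rw [hwt]
    exact_mod_cast he
  -- positivity of weights
  have hwpos : ∀ m : Fin 4 →₀ ℕ, m ≠ 0 → 1 ≤ Finsupp.weight wv m := by
    intro m hm
    by_contra hcon
    push_neg at hcon
    have h0 : Finsupp.weight wv m = 0 := by omega
    haveI : Finsupp.NonTorsionWeight ℕ wv :=
      Finsupp.nonTorsionWeight_of ℕ (w := wv) (fun i => by rw [hwv]; fin_cases i <;> decide)
    rw [Finsupp.weight_eq_zero_iff_eq_zero] at h0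
    exact hm h0
  -- key step: transferring coefficient vanishing from f to S
  have hstep : ∀ e : Fin 4 →₀ ℕ,
      (∀ m : Fin 4 →₀ ℕ, Finsupp.weight wv m < Finsupp.weight wv e →
        MvPowerSeries.coeff (R := ℂ) m S = 0) →
      MvPowerSeries.coeff (R := ℂ) e f = 0 → MvPowerSeries.coeff (R := ℂ) e S = 0 := by
    intro e hind hf0
    rw [hfS, MvPowerSeries.coeff_mul] at hf0
    rw [Finset.sum_eq_single ((0 : Fin 4 →₀ ℕ), e)] at hf0
    · dsimp only at hf0
      rw [coeff_zero_eq_constantCoeff_apply] at hf0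
      rcases mul_eq_zero.mp hf0 with h | h
      · exact absurd h hv0
      · exact h
    · rintro ⟨m1, m2⟩ hmem hne
      rw [Finset.HasAntidiagonal.mem_antidiagonal] at hmem
      dsimp only at hmem hne ⊢
      have hm1 : m1 ≠ 0 := by
        rintro rfl
        rw [zero_add] at hmem
        exact hne (by rw [hmem])
      have hlt : Finsupp.weight wv m2 < Finsupp.weight wv e := by
        have : Finsupp.weight wv m1 + Finsupp.weight wv m2 = Finsupp.weight wv e := by
          rw [← map_add, hmem]
        have h1 := hwpos m1 hm1
        omega
      rw [hind m2 hlt, mul_zero]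
    · intro hnot
      exact absurd (Finset.HasAntidiagonal.mem_antidiagonal.mpr (zero_add e)) hnot
  -- all coefficients of S of weight < 6 vanish
  have hSlow : ∀ n : ℕ, ∀ e : Fin 4 →₀ ℕ, Finsupp.weight wv e = n → n < 6 →
      MvPowerSeries.coeff (R := ℂ) e S = 0 := by
    intro n
    induction n using Nat.strong_induction_on with
    | _ n ih =>
      intro e he hn
      apply hstep e
      · intro m hm
        exact ih (Finsupp.weight wv m) (by omega) m rfl (by omega)
      · exact hfcoeff e (by omega)
  -- weights of single monomials
  have hwsingle : ∀ (i : Fin 4) (n : ℕ), Finsupp.weight wv (single i n) = n * wv i := by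
    intro i n
    rw [Finsupp.weight_apply, Finsupp.sum_single_index] <;> simp [mul_comm]
  -- the coefficient of xy in S vanishes (using the assumption hxy)
  have hSxy : MvPowerSeries.coeff (R := ℂ) (single (0 : Fin 4) 1 + single (1 : Fin 4) 1) S = 0 := by
    apply hstep
    · intro m hm
      have : Finsupp.weight wv (single (0 : Fin 4) 1 + single (1 : Fin 4) 1) = 6 := by
        rw [map_add, hwsingle, hwsingle]
        simp [hwv]
      rw [this] at hm
      exact hSlow (Finsupp.weight wv m) m rfl (by omega)
    · exact hxy
  -- the matrices of linear parts
  set L : Matrix (Fin 4) (Fin 4) ℂ :=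
    fun i k => MvPowerSeries.coeff (R := ℂ) (single k 1) (Ψ (X i)) with hL
  set L' : Matrix (Fin 4) (Fin 4) ℂ :=
    fun i k => MvPowerSeries.coeff (R := ℂ) (single k 1) (Ψ.symm (X i)) with hL'
  have hLL : L' * L = 1 := by
    ext j k
    rw [Matrix.mul_apply]
    have hw0 : MvPowerSeries.constantCoeff (σ := Fin 4) (R := ℂ) (Ψ.symm (X j)) = 0 :=
      cc_equiv_zero Ψ.symm _ (MvPowerSeries.constantCoeff_X j)
    have := lin_equiv Ψ (Ψ.symm (X j)) hw0 k
    rw [AlgEquiv.apply_symm_apply] at this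
    rw [MvPowerSeries.coeff_index_single_X] at this
    rw [Matrix.one_apply]
    rw [← this]
    by_cases hjk : j = k
    · subst hjk; simp
    · rw [if_neg hjk, if_neg (Ne.symm hjk)]
  -- extract the equations
  -- E1 : coefficient of x^2
  have hE1 : L 1 0 * L 1 0 + L 2 0 * L 2 0 + L 3 0 * L 3 0 = 0 := by
    have h := hSlow 2 (single (0 : Fin 4) 2) (by rw [hwsingle]; simp [hwv]) (by norm_num)
    rw [hS] at h
    rw [map_add, map_add, map_add, ccube2 a hca, cs2 b hcb, cs2 c hcc, cs2 d hcd] at h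
    rw [hL]
    simp only [ha, hb, hc, hd] at h ⊢
    linear_combination h
  -- E2 : coefficient of x*t  (k = 3)
  have hE2 : L 1 0 * L 1 3 + L 2 0 * L 2 3 + L 3 0 * L 3 3 = 0 := by
    have h := hSlow 3 (single (0 : Fin 4) 1 + single (3 : Fin 4) 1)
      (by rw [map_add, hwsingle, hwsingle]; simp [hwv]) (by norm_num)
    rw [hS] at h
    rw [map_add, map_add, map_add, ccube_mix a hca (by decide),
      cmix b b hcb hcb (by decide), cmix c c hcc hcc (by decide),
      cmix d d hcd hcd (by decide)] at h
    rw [hL]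
    simp only [ha, hb, hc, hd] at h ⊢
    linear_combination h / 2
  -- E3 : coefficient of x*z  (k = 2)
  have hE3 : L 1 0 * L 1 2 + L 2 0 * L 2 2 + L 3 0 * L 3 2 = 0 := by
    have h := hSlow 4 (single (0 : Fin 4) 1 + single (2 : Fin 4) 1)
      (by rw [map_add, hwsingle, hwsingle]; simp [hwv]) (by norm_num)
    rw [hS] at h
    rw [map_add, map_add, map_add, ccube_mix a hca (by decide),
      cmix b b hcb hcb (by decide), cmix c c hcc hcc (by decide),
      cmix d d hcd hcd (by decide)] at h
    rw [hL]
    simp only [ha, hb, hc, hd] at h ⊢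
    linear_combination h / 2
  -- E4 : coefficient of x*y  (k = 1)
  have hE4 : L 1 0 * L 1 1 + L 2 0 * L 2 1 + L 3 0 * L 3 1 = 0 := by
    have h := hSxy
    rw [hS] at h
    rw [map_add, map_add, map_add, ccube_mix a hca (by decide),
      cmix b b hcb hcb (by decide), cmix c c hcc hcc (by decide),
      cmix d d hcd hcd (by decide)] at h
    rw [hL]
    simp only [ha, hb, hc, hd] at h ⊢
    linear_combination h / 2
  -- E5 : coefficient of x^3
  have hE5 : (L 0 0)^3 + 2 * (L 1 0 * MvPowerSeries.coeff (R := ℂ) (single (0:Fin 4) 2) b +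
      L 2 0 * MvPowerSeries.coeff (R := ℂ) (single (0:Fin 4) 2) c +
      L 3 0 * MvPowerSeries.coeff (R := ℂ) (single (0:Fin 4) 2) d) = 0 := by
    have h := hSlow 3 (single (0 : Fin 4) 3) (by rw [hwsingle]; simp [hwv]) (by norm_num)
    rw [hS] at h
    rw [map_add, map_add, map_add, ccube3 a hca, cs3 b hcb, cs3 c hcc, cs3 d hcd] at h
    rw [hL]
    simp only [ha, hb, hc, hd] at h ⊢
    linear_combination h
  -- linear algebra: the vector (0, L 1 0, L 2 0, L 3 0) is killed by L
  set cv : Fin 4 → ℂ := ![0, L 1 0, L 2 0, L 3 0] with hcv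
  have hsum : ∀ k, ∑ j, cv j * L j k = 0 := by
    intro k
    rw [Fin.sum_univ_four]
    have c0 : cv 0 = 0 := rfl
    have c1 : cv 1 = L 1 0 := rfl
    have c2 : cv 2 = L 2 0 := rfl
    have c3 : cv 3 = L 3 0 := rfl
    rw [c0, c1, c2, c3, zero_mul, zero_add]
    fin_cases k
    · exact hE1
    · exact hE4
    · exact hE3
    · exact hE2
  have hLL2 : L * L' = 1 := mul_eq_one_comm.mp hLL
  have hcvzero : ∀ i, cv i = 0 := by
    intro i
    have h2 : ∑ k, (∑ j, cv j * L j k) * L' k i = cv i := by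
      calc ∑ k, (∑ j, cv j * L j k) * L' k i
          = ∑ j, cv j * ((L * L') j i) := by
            simp_rw [Finset.sum_mul, Matrix.mul_apply, Finset.mul_sum, mul_assoc]
            rw [Finset.sum_comm]
        _ = cv i := by
            rw [hLL2]
            rw [Finset.sum_eq_single i]
            · simp
            · intro j _ hj
              simp [Matrix.one_apply, hj]
            · simp
    rw [← h2]
    rw [Finset.sum_eq_zero]
    intro k _
    rw [hsum k, zero_mul]
  have h10 : L 1 0 = 0 := hcvzero 1
  have h20 : L 2 0 = 0 := hcvzero 2
  have h30 : L 3 0 = 0 := hcvzero 3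
  have hL00 : L 0 0 = 0 := by
    have h3 : (L 0 0)^3 = 0 := by
      linear_combination hE5 - 2 * MvPowerSeries.coeff (R := ℂ) (single (0:Fin 4) 2) b * h10
        - 2 * MvPowerSeries.coeff (R := ℂ) (single (0:Fin 4) 2) c * h20
        - 2 * MvPowerSeries.coeff (R := ℂ) (single (0:Fin 4) 2) d * h30
    exact pow_eq_zero_iff (by norm_num) |>.mp h3
  have h00 : (L' * L) 0 0 = 1 := by rw [hLL]; simp [Matrix.one_apply]
  rw [Matrix.mul_apply, Fin.sum_univ_four, hL00, h10, h20, h30] at h00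
  simp at h00
end
end

section
/- Let n, a, a′ be positive integers with a′ ≤ a. Let g ∈ ℂ[[z,t]] be a non-zero power series whose order (smallest total degree of a monomial with non-zero coefficient) is n + 1 and whose weight with respect to the weights (a,1) for (z,t) equals a(n+1). Then the weight of g with respect to the weights (a′,1) equals a′(n+1). -/
noncomputable section

open MvPowerSeries

lemma weight_fin2 (w : Fin 2 → ℕ) (d : Fin 2 →₀ ℕ) :
    Finsupp.weight w d = d 0 * w 0 + d 1 * w 1 := by
  rw [Finsupp.weight_apply, Finsupp.sum_fintype _ _ (fun i => zero_smul ℕ (w i)),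
    Fin.sum_univ_two]
  simp [mul_comm]

lemma degree_fin2 (d : Fin 2 →₀ ℕ) : Finsupp.degree d = d 0 + d 1 := by
  rw [Finsupp.degree_eq_weight_one, weight_fin2]
  simp

/-- let `n, a, a′` be positive integers with `a′ ≤ a` and let
`g ∈ ℂ[[z,t]]` be non-zero with order `n + 1` and weight `a(n+1)` w.r.t. the weights
`(a,1)` for `(z,t)`. Then the weight of `g` w.r.t. the weights `(a′,1)` is `a′(n+1)`. -/
theorem stmt11 (n a a' : ℕ) (hn : 0 < n) (ha : 0 < a) (ha' : 0 < a') (haa : a' ≤ a)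
    (g : MvPowerSeries (Fin 2) ℂ) (hg : g ≠ 0)
    (horder : g.order = ((n + 1 : ℕ) : ℕ∞))
    (hwt : g.weightedOrder ![a, 1] = ((a * (n + 1) : ℕ) : ℕ∞)) :
    g.weightedOrder ![a', 1] = ((a' * (n + 1) : ℕ) : ℕ∞) := by
  rw [weightedOrder_eq_nat] at hwt ⊢
  rw [order_eq_nat] at horder
  obtain ⟨⟨d1, hd1c, hd1w⟩, hwlow⟩ := hwt
  obtain ⟨⟨d0, hd0c, hd0w⟩, _⟩ := horder
  rw [weight_fin2] at hd1w
  rw [degree_fin2] at hd0w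
  simp only [Matrix.cons_val_zero, Matrix.cons_val_one, Matrix.head_cons, mul_one] at hd1w
  -- every nonzero coefficient has (a,1)-weight ≥ a(n+1)
  have hge : ∀ d : Fin 2 →₀ ℕ, (coeff d) g ≠ 0 → a * (n + 1) ≤ d 0 * a + d 1 := by
    intro d hd
    by_contra hlt
    push_neg at hlt
    exact hd (hwlow d (by rw [weight_fin2]; simpa using hlt))
  constructor
  · -- existence of a monomial of (a',1)-weight a'(n+1)
    rcases eq_or_lt_of_le haa with rfl | hlt
    · exact ⟨d1, hd1c, by rw [weight_fin2]; simpa [mul_comm] using hd1w⟩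
    · refine ⟨d0, hd0c, ?_⟩
      have h2 : a * (n + 1) ≤ d0 0 * a + d0 1 := hge d0 hd0c
      have hi : d0 0 = n + 1 ∧ d0 1 = 0 := by
        have h3 : n + 1 ≤ d0 0 := by
          by_contra h4
          push_neg at h4
          have := hd0w
          nlinarith [h2, hd0w]
        omega
      rw [weight_fin2]
      simp [hi.1, hi.2, mul_comm]
  · -- lower bound
    intro d hd
    by_contra hc
    rw [weight_fin2] at hd
    simp only [Matrix.cons_val_zero, Matrix.cons_val_one, Matrix.head_cons, mul_one] at hd
    have h2 := hge d hc
    rcases le_or_gt (n + 1) (d 0) with h3 | h3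
    · nlinarith
    · nlinarith [Nat.mul_le_mul (haa) (Nat.le_of_lt_succ h3 : d 0 ≤ n)]
end
end

section
/- Let u, v, w ∈ ℂ with u² = 1 and v² + w² = 1. Then in the polynomial ring ℂ[x,y,z,t] the identity (v·x + w·y + ((v−1)/2)·t²)² + (u·w·x − u·v·y + (u·w/2)·t²)² + z³ + (v·x + w·y + ((v−1)/2)·t²)·t² = x² + y² + z³ + x·t² holds. Equivalently, the ℂ-algebra endomorphism Ψ_{u,v,w} of ℂ[x,y,z,t] determined by x ↦ v·x + w·y + ((v−1)/2)·t², y ↦ u·w·x − u·v·y + (u·w/2)·t², z ↦ z, t ↦ t fixes the polynomial x² + y² + z³ + x·t². -/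
noncomputable section

open MvPolynomial

/-- for `u, v, w ∈ ℂ` with `u² = 1` and `v² + w² = 1`, the substitution
`x ↦ vx + wy + ((v−1)/2)t²`, `y ↦ uwx − uvy + (uw/2)t²`, `z ↦ z`, `t ↦ t` fixes the
polynomial `x² + y² + z³ + xt²` in `ℂ[x,y,z,t]`; both as an explicit polynomial identity
and in terms of the ℂ-algebra endomorphism `Ψ_{u,v,w} = aeval` determined by it. -/
theorem stmt13 (u v w : ℂ) (hu : u ^ 2 = 1) (hvw : v ^ 2 + w ^ 2 = 1) :
    ((C v * X 0 + C w * X 1 + C ((v - 1) / 2) * X 3 ^ 2 : MvPolynomial (Fin 4) ℂ) ^ 2 +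
        (C (u * w) * X 0 - C (u * v) * X 1 + C (u * w / 2) * X 3 ^ 2) ^ 2 +
        X 2 ^ 3 +
        (C v * X 0 + C w * X 1 + C ((v - 1) / 2) * X 3 ^ 2) * X 3 ^ 2 =
      X 0 ^ 2 + X 1 ^ 2 + X 2 ^ 3 + X 0 * X 3 ^ 2) ∧
    (aeval
        ![(C v * X 0 + C w * X 1 + C ((v - 1) / 2) * X 3 ^ 2 : MvPolynomial (Fin 4) ℂ),
          C (u * w) * X 0 - C (u * v) * X 1 + C (u * w / 2) * X 3 ^ 2,
          X 2, X 3]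
        ((X 0 : MvPolynomial (Fin 4) ℂ) ^ 2 + X 1 ^ 2 + X 2 ^ 3 + X 0 * X 3 ^ 2) =
      (X 0 : MvPolynomial (Fin 4) ℂ) ^ 2 + X 1 ^ 2 + X 2 ^ 3 + X 0 * X 3 ^ 2) := by
  have h1 : (C u : MvPolynomial (Fin 4) ℂ) ^ 2 = 1 := by
    rw [← C_pow, hu, C_1]
  have h2 : (C v : MvPolynomial (Fin 4) ℂ) ^ 2 + (C w) ^ 2 = 1 := by
    rw [← C_pow, ← C_pow, ← C_add, hvw, C_1]
  have h3 : (2 : MvPolynomial (Fin 4) ℂ) * C ((1:ℂ)/2) = 1 := by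
    rw [show ((2:MvPolynomial (Fin 4) ℂ)) = C 2 from (map_ofNat C 2).symm, ← C_mul]
    norm_num
  have key : ((C v * X 0 + C w * X 1 + C ((v - 1) / 2) * X 3 ^ 2 : MvPolynomial (Fin 4) ℂ) ^ 2 +
        (C (u * w) * X 0 - C (u * v) * X 1 + C (u * w / 2) * X 3 ^ 2) ^ 2 +
        X 2 ^ 3 +
        (C v * X 0 + C w * X 1 + C ((v - 1) / 2) * X 3 ^ 2) * X 3 ^ 2 =
      X 0 ^ 2 + X 1 ^ 2 + X 2 ^ 3 + X 0 * X 3 ^ 2) := by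
    rw [show ((v - 1) / 2 : ℂ) = (v - 1) * (1/2) from by ring,
        show (u * w / 2 : ℂ) = u * (w * (1/2)) from by ring]
    simp only [C_mul, C_sub, C_1]
    linear_combination
      (C w * X 0 - C v * X 1 + C w * C ((1:ℂ)/2) * X 3 ^ 2) ^ 2 * h1 +
      (X 0 ^ 2 + X 1 ^ 2 + C ((1:ℂ)/2) ^ 2 * (X 3 ^ 2) ^ 2 +
        2 * C ((1:ℂ)/2) * X 0 * X 3 ^ 2) * h2 +
      ((1 - C v) * (X 0 * X 3 ^ 2 + C ((1:ℂ)/2) * (X 3 ^ 2) ^ 2) - C w * X 1 * X 3 ^ 2) * h3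
  refine ⟨key, ?_⟩
  simp only [map_add, map_mul, map_pow, aeval_X]
  simpa using key
end
end

section
/- Let n ≥ 1, let f ∈ ℂ[[x₁,…,xₙ]], and let μ be a positive integer such that 𝔪^μ ⊆ j(f), where 𝔪 = (x₁,…,xₙ) is the maximal ideal and j(f) = (∂f/∂x₁,…,∂f/∂xₙ) is the Jacobian ideal. Let N ≥ μ + 1 be an integer, let h ∈ 𝔪^{N+1}, and let t₀ ∈ ℂ. In the ring R := ℂ[[x₁,…,xₙ,s]], set F := f + (t₀ + s)·h (viewing f and h as elements of R). Then the ideal of R generated by ∂F/∂x₁,…,∂F/∂xₙ equals the extension ideal j(f)·R generated by ∂f/∂x₁,…,∂f/∂xₙ. -/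
noncomputable section

/-- The formal partial derivative `∂f/∂xᵢ` of a multivariate formal power series. -/
def psDeriv {n : ℕ} (i : Fin n) (f : MvPowerSeries (Fin n) ℂ) : MvPowerSeries (Fin n) ℂ :=
  fun m => ((m i : ℂ) + 1) * MvPowerSeries.coeff (R := ℂ) (m + Finsupp.single i 1) f

/-- The maximal ideal `𝔪 = (x₁, …, xₙ)` of `ℂ[[x₁,…,xₙ]]`. -/
def maxIdeal (n : ℕ) : Ideal (MvPowerSeries (Fin n) ℂ) :=
  Ideal.span (Set.range (MvPowerSeries.X : Fin n → MvPowerSeries (Fin n) ℂ))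

/-- The Jacobian ideal `j(f) = (∂f/∂x₁, …, ∂f/∂xₙ)`. -/
def jacobianIdeal {n : ℕ} (f : MvPowerSeries (Fin n) ℂ) : Ideal (MvPowerSeries (Fin n) ℂ) :=
  Ideal.span (Set.range fun i : Fin n => psDeriv i f)

/-- The canonical inclusion `ℂ[[x₁,…,xₙ]] → R = ℂ[[x₁,…,xₙ,s]]`, where `s` is the last
variable of `Fin (n+1)`. -/
def liftPS {n : ℕ} (f : MvPowerSeries (Fin n) ℂ) : MvPowerSeries (Fin (n + 1)) ℂ :=
  fun m =>
    if m (Fin.last n) = 0 then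
      MvPowerSeries.coeff (R := ℂ)
        (Finsupp.comapDomain Fin.castSucc m (Fin.castSucc_injective n).injOn) f
    else 0

namespace Stmt15Aux

open MvPowerSeries Finsupp

variable {n k : ℕ}

lemma coeff_apply (m : Fin k →₀ ℕ) (φ : MvPowerSeries (Fin k) ℂ) :
    MvPowerSeries.coeff (R := ℂ) m φ = φ m := rfl

lemma coeff_psDeriv (i : Fin k) (m : Fin k →₀ ℕ) (φ : MvPowerSeries (Fin k) ℂ) :
    MvPowerSeries.coeff (R := ℂ) m (psDeriv i φ) =
      ((m i : ℂ) + 1) * MvPowerSeries.coeff (R := ℂ) (m + Finsupp.single i 1) φ := rfl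

/-- total degree of an exponent -/
def deg (m : Fin k →₀ ℕ) : ℕ := ∑ j, m j

lemma deg_add (a b : Fin k →₀ ℕ) : deg (a + b) = deg a + deg b := by
  simp [deg, Finset.sum_add_distrib]

lemma deg_single_one (i : Fin k) : deg (Finsupp.single i 1) = 1 := by
  simp [deg, Finsupp.single_apply]

lemma eq_zero_of_deg_eq_zero {m : Fin k →₀ ℕ} (h : deg m = 0) : m = 0 := by
  ext j
  have := Finset.sum_eq_zero_iff.mp h j (Finset.mem_univ j)
  simpa using this

lemma coeff_X_mul' (j : Fin k) (φ : MvPowerSeries (Fin k) ℂ) (m : Fin k →₀ ℕ) :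
    MvPowerSeries.coeff (R := ℂ) m (MvPowerSeries.X j * φ) =
      if Finsupp.single j 1 ≤ m then MvPowerSeries.coeff (R := ℂ) (m - Finsupp.single j 1) φ else 0 := by
  rw [show (MvPowerSeries.X j : MvPowerSeries (Fin k) ℂ)
      = MvPowerSeries.monomial (R := ℂ) (Finsupp.single j 1) 1 from rfl,
    MvPowerSeries.coeff_monomial_mul]
  simp

lemma constCoeff_of_mem_max {y : MvPowerSeries (Fin k) ℂ} (hy : y ∈ maxIdeal k) :
    MvPowerSeries.coeff (R := ℂ) 0 y = 0 := by
  have : maxIdeal k ≤ RingHom.ker (MvPowerSeries.constantCoeff (σ := Fin k) (R := ℂ)) := by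
    rw [maxIdeal, Ideal.span_le]
    rintro _ ⟨i, rfl⟩
    simp [RingHom.mem_ker]
  simpa [MvPowerSeries.coeff_zero_eq_constantCoeff, RingHom.mem_ker] using this hy

lemma coeff_eq_zero_of_mem_pow :
    ∀ (N : ℕ) (a : MvPowerSeries (Fin k) ℂ), a ∈ maxIdeal k ^ N →
      ∀ m : Fin k →₀ ℕ, deg m < N → MvPowerSeries.coeff (R := ℂ) m a = 0 := by
  intro N
  induction N with
  | zero => exact fun a _ m hm => absurd hm (Nat.not_lt_zero _)
  | succ N ih =>
    intro a ha
    rw [pow_succ] at ha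
    refine Submodule.mul_induction_on ha ?_ ?_
    · intro x hx y hy m hm
      classical
      rw [MvPowerSeries.coeff_mul]
      apply Finset.sum_eq_zero
      rintro ⟨p, q⟩ hpq
      rw [Finset.HasAntidiagonal.mem_antidiagonal] at hpq
      have hdeg : deg p + deg q = deg m := by rw [← deg_add, hpq]
      rcases Nat.eq_zero_or_pos (deg q) with h0 | h1
      · have hq0 : q = 0 := eq_zero_of_deg_eq_zero h0
        subst hq0
        rw [constCoeff_of_mem_max hy, mul_zero]
      · have : deg p < N := by omega
        rw [ih x hx p this, zero_mul]
    · intro x y hx hy m hm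
      rw [map_add, hx m hm, hy m hm, add_zero]

lemma mem_pow_of_coeff_eq_zero :
    ∀ (N : ℕ) (a : MvPowerSeries (Fin k) ℂ),
      (∀ m : Fin k →₀ ℕ, deg m < N → MvPowerSeries.coeff (R := ℂ) m a = 0) →
      a ∈ maxIdeal k ^ N := by
  intro N
  induction N with
  | zero => intro a _; simp
  | succ N ih =>
    intro a ha
    classical
    set b : Fin k → MvPowerSeries (Fin k) ℂ := fun i =>
      (fun m' => if ∀ j, j < i → m' j = 0 then a (m' + Finsupp.single i 1) else 0) with hb
    have hcb : ∀ (i : Fin k) (m' : Fin k →₀ ℕ),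
        MvPowerSeries.coeff (R := ℂ) m' (b i)
          = if ∀ j, j < i → m' j = 0 then a (m' + Finsupp.single i 1) else 0 := fun _ _ => rfl
    have key : a = ∑ i : Fin k, MvPowerSeries.X i * b i := by
      apply MvPowerSeries.ext
      intro m
      rw [map_sum]
      by_cases hm : m = 0
      · subst hm
        rw [Finset.sum_eq_zero, coeff_apply]
        · exact ha 0 (by simp [deg])
        · intro i _
          rw [coeff_X_mul', if_neg]
          simp [Finsupp.single_le_iff]
      · have hsupp : m.support.Nonempty := by
          rwa [Finsupp.support_nonempty_iff]
        set i₀ := m.support.min' hsupp with hi₀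
        have hi₀mem : i₀ ∈ m.support := Finset.min'_mem _ _
        have hi₀ne : m i₀ ≠ 0 := Finsupp.mem_support_iff.mp hi₀mem
        rw [Finset.sum_eq_single i₀]
        · rw [coeff_X_mul', if_pos (Finsupp.single_le_iff.mpr (by omega)), hcb, if_pos, coeff_apply,
            tsub_add_cancel_of_le (Finsupp.single_le_iff.mpr (by omega))]
          intro j hj
          have : j ∉ m.support := fun hjmem => absurd (Finset.min'_le _ _ hjmem) (by
            rw [← hi₀]; exact not_le_of_gt hj)
          have hmj : m j = 0 := Finsupp.notMem_support_iff.mp this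
          simp [Finsupp.tsub_apply, hmj]
        · intro i _ hne
          rw [coeff_X_mul']
          split_ifs with h1
          · rw [hcb, if_neg]
            intro hcond
            apply hne
            have hmi : m i ≠ 0 := by
              have := Finsupp.single_le_iff.mp h1; omega
            have : ∀ j, j < i → m j = 0 := by
              intro j hj
              have := hcond j hj
              rw [Finsupp.tsub_apply] at this
              have hs : Finsupp.single i (1:ℕ) j = 0 :=
                Finsupp.single_eq_of_ne (fun hij => absurd hij (by rintro rfl; exact lt_irrefl _ hj))
              omega
            -- i is the least element of the support, so i = i₀
            have himem : i ∈ m.support := Finsupp.mem_support_iff.mpr hmi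
            have h1' : i₀ ≤ i := Finset.min'_le _ _ himem
            have h2' : ¬ i₀ < i := fun hlt => hi₀ne (this i₀ hlt)
            exact le_antisymm (le_of_not_gt h2') h1'
          · rfl
        · intro habs
          exact absurd (Finset.mem_univ i₀) habs
    rw [key]
    apply Ideal.sum_mem
    intro i _
    rw [pow_succ']
    apply Ideal.mul_mem_mul
    · exact Ideal.subset_span ⟨i, rfl⟩
    · apply ih
      intro m' hm'
      rw [hcb]
      split_ifs with hcond
      · exact ha _ (by rw [deg_add, deg_single_one]; omega)
      · rfl

lemma psDeriv_mem_pow {N : ℕ} {a : MvPowerSeries (Fin k) ℂ} (ha : a ∈ maxIdeal k ^ (N + 1))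
    (i : Fin k) : psDeriv i a ∈ maxIdeal k ^ N := by
  apply mem_pow_of_coeff_eq_zero
  intro m hm
  rw [coeff_psDeriv, coeff_eq_zero_of_mem_pow (N+1) a ha, mul_zero]
  rw [deg_add, deg_single_one]; omega



/-- restriction of an exponent on `Fin (n+1)` to `Fin n` -/
def cmp (m : Fin (n + 1) →₀ ℕ) : Fin n →₀ ℕ :=
  Finsupp.comapDomain Fin.castSucc m (Fin.castSucc_injective n).injOn

lemma cmp_apply (m : Fin (n + 1) →₀ ℕ) (i : Fin n) : cmp m i = m (Fin.castSucc i) := rfl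

lemma liftPS_apply (f : MvPowerSeries (Fin n) ℂ) (m : Fin (n + 1) →₀ ℕ) :
    liftPS f m = if m (Fin.last n) = 0 then MvPowerSeries.coeff (R := ℂ) (cmp m) f else 0 := rfl

lemma coeff_liftPS (f : MvPowerSeries (Fin n) ℂ) (m : Fin (n + 1) →₀ ℕ) :
    MvPowerSeries.coeff (R := ℂ) m (liftPS f)
      = if m (Fin.last n) = 0 then MvPowerSeries.coeff (R := ℂ) (cmp m) f else 0 := rfl

lemma cmp_add (p q : Fin (n + 1) →₀ ℕ) : cmp (p + q) = cmp p + cmp q :=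
  Finsupp.comapDomain_add_of_injective (Fin.castSucc_injective n) _ _

lemma cmp_single (i : Fin n) (v : ℕ) : cmp (Finsupp.single (Fin.castSucc i) v) = Finsupp.single i v :=
  Finsupp.comapDomain_single _ _ _ _

lemma map_cmp_of_last_eq_zero {m : Fin (n + 1) →₀ ℕ} (hm : m (Fin.last n) = 0) :
    Finsupp.mapDomain Fin.castSucc (cmp m) = m := by
  ext a
  rcases Fin.eq_castSucc_or_eq_last a with ⟨i, rfl⟩ | rfl
  · rw [Finsupp.mapDomain_apply (Fin.castSucc_injective n), cmp_apply]
  · rw [Finsupp.mapDomain_notin_range, hm]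
    rintro ⟨i, hi⟩
    exact absurd hi (Fin.castSucc_lt_last i).ne

lemma cmp_mapDomain (d : Fin n →₀ ℕ) :
    cmp (Finsupp.mapDomain Fin.castSucc d) = d := by
  ext i
  rw [cmp_apply, Finsupp.mapDomain_apply (Fin.castSucc_injective n)]

lemma mapDomain_last_eq_zero (d : Fin n →₀ ℕ) :
    (Finsupp.mapDomain Fin.castSucc d) (Fin.last n) = 0 := by
  rw [Finsupp.mapDomain_notin_range]
  rintro ⟨i, hi⟩
  exact absurd hi (Fin.castSucc_lt_last i).ne

lemma eq_zero_of_cmp {m : Fin (n + 1) →₀ ℕ} (hlast : m (Fin.last n) = 0) (hcmp : cmp m = 0) :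
    m = 0 := by
  have := map_cmp_of_last_eq_zero hlast
  rw [hcmp] at this
  simpa using this.symm

lemma liftPS_add (a b : MvPowerSeries (Fin n) ℂ) :
    liftPS (a + b) = liftPS a + liftPS b := by
  apply MvPowerSeries.ext
  intro m
  rw [map_add, coeff_liftPS, coeff_liftPS, coeff_liftPS, map_add]
  split_ifs <;> simp

lemma liftPS_zero : liftPS (0 : MvPowerSeries (Fin n) ℂ) = 0 := by
  apply MvPowerSeries.ext
  intro m
  rw [coeff_liftPS]
  simp

lemma liftPS_one : liftPS (1 : MvPowerSeries (Fin n) ℂ) = 1 := by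
  apply MvPowerSeries.ext
  intro m
  rw [coeff_liftPS, MvPowerSeries.coeff_one, MvPowerSeries.coeff_one]
  by_cases hm : m = 0
  · subst hm; simp [cmp]
  · rw [if_neg hm]
    split_ifs with h1 h2
    · exact absurd (eq_zero_of_cmp h1 h2) hm
    · rfl
    · rfl

lemma liftPS_mul (a b : MvPowerSeries (Fin n) ℂ) :
    liftPS (a * b) = liftPS a * liftPS b := by
  classical
  apply MvPowerSeries.ext
  intro m
  rw [MvPowerSeries.coeff_mul, coeff_liftPS]
  by_cases hm : m (Fin.last n) = 0
  · rw [if_pos hm, MvPowerSeries.coeff_mul]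
    refine (Finset.sum_nbij' (fun pq => (Finsupp.mapDomain Fin.castSucc pq.1,
        Finsupp.mapDomain Fin.castSucc pq.2)) (fun pq => (cmp pq.1, cmp pq.2))
        ?_ ?_ ?_ ?_ ?_)
    · rintro ⟨p, q⟩ hpq
      rw [Finset.HasAntidiagonal.mem_antidiagonal] at hpq ⊢
      rw [← Finsupp.mapDomain_add, hpq, map_cmp_of_last_eq_zero hm]
    · rintro ⟨p, q⟩ hpq
      rw [Finset.HasAntidiagonal.mem_antidiagonal] at hpq ⊢
      rw [← cmp_add, hpq]
    · rintro ⟨p, q⟩ hpq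
      simp [cmp_mapDomain]
    · rintro ⟨p, q⟩ hpq
      rw [Finset.HasAntidiagonal.mem_antidiagonal] at hpq
      have hp : p (Fin.last n) = 0 := by
        have := DFunLike.congr_fun hpq (Fin.last n)
        simp only [Finsupp.add_apply] at this
        omega
      have hq : q (Fin.last n) = 0 := by
        have := DFunLike.congr_fun hpq (Fin.last n)
        simp only [Finsupp.add_apply] at this
        omega
      simp [map_cmp_of_last_eq_zero hp, map_cmp_of_last_eq_zero hq]
    · rintro ⟨p, q⟩ hpq
      rw [Finset.HasAntidiagonal.mem_antidiagonal] at hpq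
      show MvPowerSeries.coeff (R := ℂ) p a * MvPowerSeries.coeff (R := ℂ) q b
        = liftPS a (Finsupp.mapDomain Fin.castSucc p) * liftPS b (Finsupp.mapDomain Fin.castSucc q)
      rw [liftPS_apply, liftPS_apply, if_pos (mapDomain_last_eq_zero p),
        if_pos (mapDomain_last_eq_zero q), cmp_mapDomain, cmp_mapDomain]
  · rw [if_neg hm]
    refine (Finset.sum_eq_zero ?_).symm
    rintro ⟨p, q⟩ hpq
    rw [Finset.HasAntidiagonal.mem_antidiagonal] at hpq
    have : p (Fin.last n) ≠ 0 ∨ q (Fin.last n) ≠ 0 := by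
      by_contra hc
      push_neg at hc
      have := DFunLike.congr_fun hpq (Fin.last n)
      simp only [Finsupp.add_apply] at this
      omega
    rcases this with hp | hq
    · show liftPS a p * liftPS b q = 0
      rw [liftPS_apply, if_neg hp, zero_mul]
    · show liftPS a p * liftPS b q = 0
      rw [liftPS_apply b q, if_neg hq, mul_zero]

/-- `liftPS` as a ring homomorphism. -/
def liftHom : MvPowerSeries (Fin n) ℂ →+* MvPowerSeries (Fin (n + 1)) ℂ where
  toFun := liftPS
  map_one' := liftPS_one
  map_mul' := liftPS_mul
  map_zero' := liftPS_zero
  map_add' := liftPS_add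

lemma liftHom_apply (a : MvPowerSeries (Fin n) ℂ) : liftHom a = liftPS a := rfl

lemma liftPS_X (i : Fin n) :
    liftPS (MvPowerSeries.X i) = (MvPowerSeries.X (Fin.castSucc i) :
      MvPowerSeries (Fin (n + 1)) ℂ) := by
  apply MvPowerSeries.ext
  intro m
  classical
  rw [coeff_liftPS, MvPowerSeries.coeff_X, MvPowerSeries.coeff_X]
  by_cases hm : m = Finsupp.single (Fin.castSucc i) 1
  · subst hm
    rw [if_pos (Finsupp.single_eq_of_ne' (Fin.castSucc_lt_last i).ne), cmp_single]
    simp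
  · rw [if_neg hm]
    split_ifs with h1 h2
    · exfalso
      apply hm
      have := map_cmp_of_last_eq_zero h1
      rw [h2, Finsupp.mapDomain_single] at this
      exact this.symm
    · rfl
    · rfl

lemma psDeriv_add {k : ℕ} (i : Fin k) (a b : MvPowerSeries (Fin k) ℂ) :
    psDeriv i (a + b) = psDeriv i a + psDeriv i b := by
  apply MvPowerSeries.ext
  intro m
  rw [map_add, coeff_psDeriv, coeff_psDeriv, coeff_psDeriv, map_add]
  ring

lemma psDeriv_liftPS (i : Fin n) (g : MvPowerSeries (Fin n) ℂ) :
    psDeriv (Fin.castSucc i) (liftPS g) = liftPS (psDeriv i g) := by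
  apply MvPowerSeries.ext
  intro m
  rw [coeff_psDeriv, coeff_liftPS, coeff_liftPS]
  have hlast : ((m + Finsupp.single (Fin.castSucc i) 1 : Fin (n+1) →₀ ℕ)) (Fin.last n) = m (Fin.last n) := by
    rw [Finsupp.add_apply, Finsupp.single_eq_of_ne' (Fin.castSucc_lt_last i).ne, add_zero]
  rw [hlast]
  by_cases hm : m (Fin.last n) = 0
  · rw [if_pos hm, if_pos hm, cmp_add, cmp_single, coeff_psDeriv, cmp_apply]
  · rw [if_neg hm, if_neg hm, mul_zero]

lemma psDeriv_C_mul {k : ℕ} (i : Fin k) (c : ℂ) (H : MvPowerSeries (Fin k) ℂ) :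
    psDeriv i (MvPowerSeries.C (σ := Fin k) (R := ℂ) c * H) = MvPowerSeries.C (σ := Fin k) (R := ℂ) c * psDeriv i H := by
  apply MvPowerSeries.ext
  intro m
  rw [coeff_psDeriv, MvPowerSeries.coeff_C_mul, MvPowerSeries.coeff_C_mul, coeff_psDeriv]
  ring

lemma psDeriv_X_mul {k : ℕ} {i j : Fin k} (hij : i ≠ j) (H : MvPowerSeries (Fin k) ℂ) :
    psDeriv i (MvPowerSeries.X j * H) = MvPowerSeries.X j * psDeriv i H := by
  classical
  apply MvPowerSeries.ext
  intro m
  rw [coeff_psDeriv, coeff_X_mul', coeff_X_mul']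
  have hcond : Finsupp.single j 1 ≤ m + Finsupp.single i 1 ↔ Finsupp.single j 1 ≤ m := by
    rw [Finsupp.single_le_iff, Finsupp.single_le_iff, Finsupp.add_apply,
      Finsupp.single_eq_of_ne' hij, add_zero]
  by_cases hj : Finsupp.single j 1 ≤ m
  · rw [if_pos (hcond.mpr hj), if_pos hj]
    have hmj : 1 ≤ m j := Finsupp.single_le_iff.mp hj
    have harith : m + Finsupp.single i 1 - Finsupp.single j 1
        = m - Finsupp.single j 1 + Finsupp.single i 1 := by
      ext a
      simp only [Finsupp.tsub_apply, Finsupp.add_apply, Finsupp.single_apply]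
      split_ifs <;> omega
    rw [harith, coeff_psDeriv]
    have : ((m - Finsupp.single j 1 : Fin k →₀ ℕ)) i = m i := by
      rw [Finsupp.tsub_apply, Finsupp.single_eq_of_ne' (Ne.symm hij), Nat.sub_zero]
    rw [this]
  · rw [if_neg (fun hc => hj (hcond.mp hc)), if_neg hj, mul_zero]


end Stmt15Aux

open Stmt15Aux in
/-- let `f ∈ ℂ[[x₁,…,xₙ]]` and let `μ > 0` be such that `𝔪^μ ⊆ j(f)`. Let
`N ≥ μ + 1`, let `h ∈ 𝔪^{N+1}` and let `t₀ ∈ ℂ`. In `R = ℂ[[x₁,…,xₙ,s]]`, set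
`F := f + (t₀ + s)·h`. Then the ideal of `R` generated by `∂F/∂x₁, …, ∂F/∂xₙ` equals the
extension ideal `j(f)·R`, i.e. the ideal of `R` generated by `∂f/∂x₁, …, ∂f/∂xₙ`. -/
theorem stmt15 (n : ℕ) (hn : 1 ≤ n) (f : MvPowerSeries (Fin n) ℂ)
    (μ : ℕ) (hμ : 0 < μ) (hjac : (maxIdeal n) ^ μ ≤ jacobianIdeal f)
    (N : ℕ) (hN : μ + 1 ≤ N)
    (h : MvPowerSeries (Fin n) ℂ) (hh : h ∈ (maxIdeal n) ^ (N + 1))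
    (t₀ : ℂ) :
    ∀ F : MvPowerSeries (Fin (n + 1)) ℂ,
      F = liftPS f +
            (MvPowerSeries.C (σ := Fin (n + 1)) (R := ℂ) t₀ + MvPowerSeries.X (Fin.last n)) * liftPS h →
      Ideal.span (Set.range fun i : Fin n => psDeriv (Fin.castSucc i) F) =
        Ideal.span (Set.range fun i : Fin n => liftPS (psDeriv i f)) := by
  intro F hF
  classical
  have hDF : ∀ i : Fin n, psDeriv (Fin.castSucc i) F
      = liftPS (psDeriv i f)
        + (MvPowerSeries.C (σ := Fin (n+1)) (R := ℂ) t₀ + MvPowerSeries.X (Fin.last n))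
            * liftPS (psDeriv i h) := by
    intro i
    rw [hF, psDeriv_add, psDeriv_liftPS, add_mul, psDeriv_add, psDeriv_C_mul,
      psDeriv_X_mul (Fin.castSucc_lt_last i).ne, psDeriv_liftPS, add_mul]
  set M : Ideal (MvPowerSeries (Fin (n+1)) ℂ) := maxIdeal (n+1) with hM
  set J : Ideal (MvPowerSeries (Fin (n+1)) ℂ) :=
    Ideal.span (Set.range fun i : Fin n => liftPS (psDeriv i f)) with hJ
  set I : Ideal (MvPowerSeries (Fin (n+1)) ℂ) :=
    Ideal.span (Set.range fun i : Fin n => psDeriv (Fin.castSucc i) F) with hI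
  have hJmap : Ideal.map (liftHom (n := n)) (jacobianIdeal f) = J := by
    rw [jacobianIdeal, Ideal.map_span, ← Set.range_comp, hJ]
    rfl
  have hmmap : Ideal.map (liftHom (n := n)) (maxIdeal n) ≤ M := by
    rw [maxIdeal, Ideal.map_span]
    apply Ideal.span_le.mpr
    rintro _ ⟨_, ⟨i, rfl⟩, rfl⟩
    rw [SetLike.mem_coe, liftHom_apply, liftPS_X]
    exact Ideal.subset_span ⟨Fin.castSucc i, rfl⟩
  have hd : ∀ i : Fin n, liftPS (psDeriv i h) ∈ M * J := by
    intro i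
    have h1 : psDeriv i h ∈ maxIdeal n ^ N := psDeriv_mem_pow hh i
    have h2 : maxIdeal n ^ N ≤ maxIdeal n * jacobianIdeal f := by
      calc maxIdeal n ^ N ≤ maxIdeal n ^ (μ+1) := Ideal.pow_le_pow_right hN
        _ = maxIdeal n * maxIdeal n ^ μ := pow_succ' _ _
        _ ≤ maxIdeal n * jacobianIdeal f := Ideal.mul_mono_right hjac
    have h3 := Ideal.mem_map_of_mem (liftHom (n := n)) (h2 h1)
    rw [Ideal.map_mul] at h3
    exact Ideal.mul_mono hmmap (le_of_eq hJmap) h3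
  have hMJ : ∀ i : Fin n,
      (MvPowerSeries.C (σ := Fin (n+1)) (R := ℂ) t₀ + MvPowerSeries.X (Fin.last n))
        * liftPS (psDeriv i h) ∈ M * J :=
    fun i => Ideal.mul_mem_left _ _ (hd i)
  have hIJ : I ≤ J := by
    rw [hI, Ideal.span_le]
    rintro _ ⟨i, rfl⟩
    show psDeriv (Fin.castSucc i) F ∈ J
    rw [hDF i]
    exact Ideal.add_mem _ (Ideal.subset_span ⟨i, rfl⟩) (Ideal.mul_le_right (hMJ i))
  have hJI : J ≤ I ⊔ M • J := by
    conv_lhs => rw [hJ]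
    rw [Ideal.span_le]
    rintro _ ⟨i, rfl⟩
    have heq : liftPS (psDeriv i f)
        = psDeriv (Fin.castSucc i) F
          - (MvPowerSeries.C (σ := Fin (n+1)) (R := ℂ) t₀ + MvPowerSeries.X (Fin.last n))
              * liftPS (psDeriv i h) :=
      eq_sub_of_add_eq (hDF i).symm
    show liftPS (psDeriv i f) ∈ I ⊔ M • J
    rw [heq]
    refine Submodule.sub_mem _ (Submodule.mem_sup_left (Ideal.subset_span ⟨i, rfl⟩))
      (Submodule.mem_sup_right ?_)
    rw [Ideal.smul_eq_mul]
    exact hMJ i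
  have hMjac : M ≤ Ideal.jacobson ⊥ := by
    rw [hM, maxIdeal]
    apply Ideal.span_le.mpr
    rintro _ ⟨a, rfl⟩
    rw [SetLike.mem_coe, Ideal.mem_jacobson_bot]
    intro y
    rw [MvPowerSeries.isUnit_iff_constantCoeff]
    simp
  have hfg : J.FG := Submodule.fg_span (Set.finite_range _)
  exact le_antisymm hIJ (Submodule.le_of_le_smul_of_le_jacobson_bot hfg hMjac hJI)
end
end
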